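/- arXiv:0911.2048 — 13 statements merged into one kernel-verified Lean document; each statement's English description precedes it below -/
import Mathlib

section
/- Every finite nilpotent group admits a totally round cycle; that is, every finite nilpotent group is round. -/
/-- A cycle of length `n = Nat.card G` over `G` is a function `ZMod n → G`.
It is `k`-round if for all integers `m₁, …, m_k`, the map
`i ↦ g (i+m₁) * g (i+m₂) * ⋯ * g (i+m_k)` is a bijection from `ZMod n` to `G`. -/
def IsRoundCycle (G : Type*) [Group G] (k : ℕ) (g : ZMod (Nat.card G) → G) : Prop :=
  ∀ m : Fin k → ℤ,
    Function.Bijective fun i : ZMod (Nat.card G) =>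
      (List.ofFn fun j : Fin k => g (i + (m j : ZMod (Nat.card G)))).prod

/-- `G` is `k`-round if it admits a `k`-round cycle. -/
def IsKRound (G : Type*) [Group G] (k : ℕ) : Prop :=
  ∃ g : ZMod (Nat.card G) → G, IsRoundCycle G k g

/-- A cycle is totally round if it is `k`-round for every `k ≥ 1` with `gcd(k, n) = 1`. -/
def IsTotallyRoundCycle (G : Type*) [Group G] (g : ZMod (Nat.card G) → G) : Prop :=
  ∀ k : ℕ, 1 ≤ k → Nat.gcd k (Nat.card G) = 1 → IsRoundCycle G k g

/-- `G` is round if it admits a totally round cycle. -/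
def IsRound (G : Type*) [Group G] : Prop :=
  ∃ g : ZMod (Nat.card G) → G, IsTotallyRoundCycle G g

private lemma roundAux_prod_central {G : Type*} [Group G] (z : G) (hz : ∀ g : G, Commute z g) :
    ∀ (k : ℕ) (a : Fin k → G) (e : Fin k → ℕ),
    (List.ofFn fun j => a j * z ^ e j).prod = (List.ofFn a).prod * z ^ (∑ j, e j) := by
  intro k
  induction k with
  | zero => intro a e; simp
  | succ k ih =>
    intro a e
    rw [List.ofFn_succ, List.ofFn_succ (f := a), List.prod_cons, List.prod_cons,
      ih (fun j => a j.succ) (fun j => e j.succ), Fin.sum_univ_succ]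
    have hcomm : Commute (z ^ e 0) ((List.ofFn fun j => a j.succ).prod) :=
      Commute.pow_left
        (Commute.list_prod_right (List.ofFn fun j => a j.succ) z (fun y _ => hz y)) _
    rw [mul_assoc, mul_assoc, ← mul_assoc (z ^ e 0), hcomm.eq, mul_assoc, ← pow_add]

private lemma roundAux_digit (n' p : ℕ) (hn' : 0 < n') (v m : ℕ) :
    ((v + m) % (n' * p)) / n' ≡ v / n' + (v % n' + m) / n' [MOD p] := by
  have h1 : ((v + m) % (n' * p)) / n' ≡ (v + m) / n' [MOD p] := by
    conv_rhs => rw [← Nat.div_add_mod (v + m) (n' * p), mul_assoc, Nat.mul_add_div hn']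
    simp [Nat.ModEq, Nat.mul_add_mod]
  have h2 : (v + m) / n' = v / n' + (v % n' + m) / n' := by
    conv_lhs => rw [← Nat.div_add_mod v n']
    rw [add_assoc, Nat.mul_add_div hn']
  rw [← h2]; exact h1

private lemma roundAux_step {G Q : Type*} [Group G] [Finite G] [Group Q]
    (π : G →* Q) (s : Q → G) (hs : ∀ y, π (s y) = y)
    (z : G) (p : ℕ) (hp : 2 ≤ p)
    (hzcom : ∀ g : G, Commute z g) (hzord : orderOf z = p) (hπz : π z = 1)
    (hN : Nat.card G = Nat.card Q * p)
    (q : ZMod (Nat.card Q) → Q) (hq : IsTotallyRoundCycle Q q) : IsRound G := by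
  have hNpos : 0 < Nat.card G := Nat.card_pos
  have hn'pos : 0 < Nat.card Q := by
    rcases Nat.eq_zero_or_pos (Nat.card Q) with h0 | h0
    · rw [h0, zero_mul] at hN; omega
    · exact h0
  haveI : NeZero (Nat.card G) := ⟨hNpos.ne'⟩
  have hdvd : Nat.card Q ∣ Nat.card G := ⟨p, hN⟩
  have hpdvd : p ∣ Nat.card G := ⟨Nat.card Q, by rw [hN, mul_comm]⟩
  have hφval : ∀ x : ZMod (Nat.card G),
      (ZMod.castHom hdvd (ZMod (Nat.card Q)) x).val = x.val % Nat.card Q := by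
    intro x
    rw [ZMod.castHom_apply, ← ZMod.natCast_val x, ZMod.val_natCast]
  refine ⟨fun x => s (q (ZMod.castHom hdvd (ZMod (Nat.card Q)) x)) * z ^ (x.val / Nat.card Q), ?_⟩
  intro k hk hgcd m
  have hgcd' : Nat.gcd k (Nat.card Q) = 1 := Nat.Coprime.coprime_dvd_right hdvd hgcd
  have hpk : Nat.gcd p k = 1 := (Nat.Coprime.coprime_dvd_right hpdvd hgcd).symm
  have hq' := hq k hk hgcd' m
  -- rewriting the product
  have hrw : ∀ i : ZMod (Nat.card G),
      (List.ofFn fun j => s (q (ZMod.castHom hdvd (ZMod (Nat.card Q))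
            (i + ((m j : ℤ) : ZMod (Nat.card G))))) *
          z ^ ((i + ((m j : ℤ) : ZMod (Nat.card G))).val / Nat.card Q)).prod
      = (List.ofFn fun j => s (q (ZMod.castHom hdvd (ZMod (Nat.card Q)) i
            + ((m j : ℤ) : ZMod (Nat.card Q))))).prod
        * z ^ (∑ j, (i + ((m j : ℤ) : ZMod (Nat.card G))).val / Nat.card Q) := by
    intro i
    rw [← roundAux_prod_central z hzcom k _ _]
    congr 1
    exact congrArg List.ofFn (funext fun j => by rw [map_add, map_intCast])
  have hmk : ∀ i : ZMod (Nat.card G),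
      π ((List.ofFn fun j => s (q (ZMod.castHom hdvd (ZMod (Nat.card Q)) i
            + ((m j : ℤ) : ZMod (Nat.card Q))))).prod)
      = (List.ofFn fun j => q (ZMod.castHom hdvd (ZMod (Nat.card Q)) i
            + ((m j : ℤ) : ZMod (Nat.card Q)))).prod := by
    intro i
    rw [map_list_prod, List.map_ofFn]
    exact congrArg List.prod (congrArg List.ofFn (funext fun j => hs _))
  -- injectivity
  have hinj : Function.Injective fun i : ZMod (Nat.card G) =>
      (List.ofFn fun j : Fin k =>
        s (q (ZMod.castHom hdvd (ZMod (Nat.card Q)) (i + ((m j : ℤ) : ZMod (Nat.card G))))) *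
          z ^ ((i + ((m j : ℤ) : ZMod (Nat.card G))).val / Nat.card Q)).prod := by
    intro i i' hEq
    simp only [hrw] at hEq
    have hA : ZMod.castHom hdvd (ZMod (Nat.card Q)) i
        = ZMod.castHom hdvd (ZMod (Nat.card Q)) i' := by
      apply hq'.injective
      have h2 := congrArg π hEq
      simp only [map_mul, map_pow, hπz, one_pow, mul_one, hmk] at h2
      exact h2
    have hval : i.val % Nat.card Q = i'.val % Nat.card Q := by
      have h3 := congrArg ZMod.val hA
      rwa [hφval, hφval] at h3
    have hzpow : z ^ (∑ j, (i + ((m j : ℤ) : ZMod (Nat.card G))).val / Nat.card Q)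
        = z ^ (∑ j, (i' + ((m j : ℤ) : ZMod (Nat.card G))).val / Nat.card Q) := by
      rw [hA] at hEq
      exact mul_left_cancel hEq
    have hmod : (∑ j, (i + ((m j : ℤ) : ZMod (Nat.card G))).val / Nat.card Q)
        ≡ (∑ j, (i' + ((m j : ℤ) : ZMod (Nat.card G))).val / Nat.card Q) [MOD p] := by
      rw [← hzord]
      exact pow_eq_pow_iff_modEq.mp hzpow
    have he : ∀ (x : ZMod (Nat.card G)) (j : Fin k),
        (x + ((m j : ℤ) : ZMod (Nat.card G))).val / Nat.card Q
        ≡ x.val / Nat.card Q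
          + (x.val % Nat.card Q + ((m j : ℤ) : ZMod (Nat.card G)).val) / Nat.card Q [MOD p] := by
      intro x j
      rw [ZMod.val_add]
      generalize ((m j : ℤ) : ZMod (Nat.card G)).val = w
      generalize x.val = v
      rw [hN]
      exact roundAux_digit _ p hn'pos v w
    have hsum : ∀ x : ZMod (Nat.card G),
        (∑ j, (x + ((m j : ℤ) : ZMod (Nat.card G))).val / Nat.card Q)
        ≡ k * (x.val / Nat.card Q)
          + ∑ j, (x.val % Nat.card Q + ((m j : ℤ) : ZMod (Nat.card G)).val) / Nat.card Q
          [MOD p] := by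
      intro x
      have h4 : (∑ j, (x + ((m j : ℤ) : ZMod (Nat.card G))).val / Nat.card Q)
          ≡ (∑ j : Fin k, (x.val / Nat.card Q
            + (x.val % Nat.card Q + ((m j : ℤ) : ZMod (Nat.card G)).val) / Nat.card Q))
            [MOD p] := by
        unfold Nat.ModEq
        rw [Finset.sum_nat_mod, Finset.sum_nat_mod _ p (fun j : Fin k => x.val / Nat.card Q
          + (x.val % Nat.card Q + ((m j : ℤ) : ZMod (Nat.card G)).val) / Nat.card Q)]
        congr 1
        exact Finset.sum_congr rfl fun j _ => he x j
      have h5 : (∑ j : Fin k, (x.val / Nat.card Q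
          + (x.val % Nat.card Q + ((m j : ℤ) : ZMod (Nat.card G)).val) / Nat.card Q))
          = k * (x.val / Nat.card Q)
          + ∑ j, (x.val % Nat.card Q + ((m j : ℤ) : ZMod (Nat.card G)).val) / Nat.card Q := by
        rw [Finset.sum_add_distrib, Finset.sum_const, Finset.card_univ, Fintype.card_fin,
          smul_eq_mul]
      rw [h5] at h4
      exact h4
    have hkey : k * (i.val / Nat.card Q) ≡ k * (i'.val / Nat.card Q) [MOD p] := by
      have h6 := ((hsum i).symm.trans hmod).trans (hsum i')
      rw [hval] at h6
      exact Nat.ModEq.add_right_cancel' _ h6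
    have hdiv : i.val / Nat.card Q = i'.val / Nat.card Q := by
      have h8 : i.val / Nat.card Q ≡ i'.val / Nat.card Q [MOD p] :=
        Nat.ModEq.cancel_left_of_coprime hpk hkey
      have hlt1 : i.val / Nat.card Q < p :=
        Nat.div_lt_of_lt_mul (by rw [← hN]; exact ZMod.val_lt i)
      have hlt2 : i'.val / Nat.card Q < p :=
        Nat.div_lt_of_lt_mul (by rw [← hN]; exact ZMod.val_lt i')
      rw [Nat.ModEq, Nat.mod_eq_of_lt hlt1, Nat.mod_eq_of_lt hlt2] at h8
      exact h8
    apply ZMod.val_injective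
    rw [← Nat.div_add_mod i.val (Nat.card Q), ← Nat.div_add_mod i'.val (Nat.card Q), hdiv, hval]
  rw [Nat.bijective_iff_injective_and_card]
  exact ⟨hinj, by rw [Nat.card_zmod]⟩


private lemma roundAux_center {G : Type*} [Group G] [Nontrivial G]
    (h : Group.IsNilpotent G) : ∃ z : G, z ∈ Subgroup.center G ∧ z ≠ 1 := by
  classical
  have hlcs := nilpotent_iff_lowerCentralSeries.mp h
  have hc0 : (⊤ : Subgroup G).lowerCentralSeries (Nat.find hlcs) = ⊥ := Nat.find_spec hlcs
  have hne0 : Nat.find hlcs ≠ 0 := by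
    intro h0
    rw [h0, Subgroup.lowerCentralSeries_zero] at hc0
    exact top_ne_bot hc0
  obtain ⟨d, hd⟩ : ∃ d, Nat.find hlcs = d + 1 :=
    ⟨Nat.find hlcs - 1, (Nat.succ_pred_eq_of_pos (Nat.pos_of_ne_zero hne0)).symm⟩
  have hdne : (⊤ : Subgroup G).lowerCentralSeries d ≠ ⊥ := Nat.find_min hlcs (by omega)
  have hle : (⊤ : Subgroup G).lowerCentralSeries d ≤ Subgroup.center G := by
    intro y hy
    rw [Subgroup.mem_center_iff]
    intro g
    have hmem : y * g * y⁻¹ * g⁻¹ ∈ (⊤ : Subgroup G).lowerCentralSeries (d + 1) := by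
      rw [Subgroup.lowerCentralSeries_succ]
      exact Subgroup.subset_closure ⟨y, hy, g, Subgroup.mem_top g, rfl⟩
    rw [← hd, hc0, Subgroup.mem_bot] at hmem
    have key : y * g * (g * y)⁻¹ = 1 := by
      have hh : y * g * (g * y)⁻¹ = y * g * y⁻¹ * g⁻¹ := by group
      rw [hh, hmem]
    exact (mul_inv_eq_one.mp key).symm
  obtain ⟨y, hy, hyne⟩ : ∃ y ∈ (⊤ : Subgroup G).lowerCentralSeries d, y ≠ 1 := by
    by_contra hcon
    push_neg at hcon
    exact hdne (Subgroup.eq_bot_iff_forall _ |>.mpr hcon)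
  exact ⟨y, hle hy, hyne⟩

universe u

private lemma roundAux : ∀ (n : ℕ) (G : Type u) [Group G] [Finite G],
    Group.IsNilpotent G → Nat.card G = n → IsRound G := by
  intro n
  induction n using Nat.strong_induction_on with
  | _ n ih =>
    intro G _ _ hnil hcard
    by_cases htriv : Nat.card G = 1
    · haveI hGsub : Subsingleton G := (Nat.card_eq_one_iff_unique.mp htriv).1
      haveI hzsub : Subsingleton (ZMod (Nat.card G)) := by rw [htriv]; infer_instance
      exact ⟨fun _ => 1, fun k hk hg m =>
        ⟨fun a b _ => Subsingleton.elim a b, fun y2 => ⟨0, Subsingleton.elim _ y2⟩⟩⟩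
    · have hpos : 0 < Nat.card G := Nat.card_pos
      haveI : Nontrivial G := Finite.one_lt_card_iff_nontrivial.mp (by omega)
      haveI : Group.IsNilpotent G := hnil
      obtain ⟨y, hyc, hyne⟩ := roundAux_center hnil
      haveI : Nontrivial (Subgroup.center G) :=
        ⟨⟨⟨y, hyc⟩, 1, by simp [Subtype.ext_iff, hyne]⟩⟩
      have hcc : Nat.card (Subgroup.center G) ≠ 1 := by
        have := Finite.one_lt_card_iff_nontrivial (α := Subgroup.center G) |>.mpr
          (inferInstanceAs (Nontrivial (Subgroup.center G)))
        omega
      have hppr : (Nat.card (Subgroup.center G)).minFac.Prime := Nat.minFac_prime hcc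
      haveI : Fact (Nat.card (Subgroup.center G)).minFac.Prime := ⟨hppr⟩
      obtain ⟨x, hxord⟩ := exists_prime_orderOf_dvd_card' (G := Subgroup.center G)
        (Nat.card (Subgroup.center G)).minFac (Nat.minFac_dvd _)
      have hzc : (x : G) ∈ Subgroup.center G := x.2
      have hzord : orderOf (x : G) = (Nat.card (Subgroup.center G)).minFac := by
        rw [Subgroup.orderOf_coe, hxord]
      have hzcom : ∀ g : G, Commute (x : G) g := fun g => (Subgroup.mem_center_iff.mp hzc g).symm
      haveI hZn : (Subgroup.zpowers (x : G)).Normal := by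
        constructor
        intro a ha g
        have hac : a ∈ Subgroup.center G := Subgroup.zpowers_le.mpr hzc ha
        have h7 : g * a * g⁻¹ = a := by
          rw [Subgroup.mem_center_iff.mp hac g]; exact mul_inv_cancel_right a g
        rw [h7]; exact ha
      have hcardZ : Nat.card (Subgroup.zpowers (x : G)) = (Nat.card (Subgroup.center G)).minFac := by
        rw [Nat.card_zpowers, hzord]
      have hN : Nat.card G = Nat.card (G ⧸ Subgroup.zpowers (x : G))
          * (Nat.card (Subgroup.center G)).minFac := by
        rw [Subgroup.card_eq_card_quotient_mul_card_subgroup (Subgroup.zpowers (x : G)), hcardZ]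
      have hQpos : 0 < Nat.card (G ⧸ Subgroup.zpowers (x : G)) := Nat.card_pos
      have hQlt : Nat.card (G ⧸ Subgroup.zpowers (x : G)) < n := by
        calc Nat.card (G ⧸ Subgroup.zpowers (x : G))
            < Nat.card (G ⧸ Subgroup.zpowers (x : G)) * (Nat.card (Subgroup.center G)).minFac :=
              (Nat.lt_mul_iff_one_lt_right hQpos).mpr (by have := hppr.two_le; omega)
          _ = Nat.card G := hN.symm
          _ = n := hcard
      obtain ⟨q, hq⟩ := ih (Nat.card (G ⧸ Subgroup.zpowers (x : G))) hQlt
        (G ⧸ Subgroup.zpowers (x : G)) inferInstance rfl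
      exact roundAux_step (QuotientGroup.mk' (Subgroup.zpowers (x : G))) Quotient.out
        (fun y => QuotientGroup.out_eq' y) (x : G) _ hppr.two_le hzcom hzord
        ((QuotientGroup.eq_one_iff (x : G)).mpr (Subgroup.mem_zpowers _)) hN q hq

/-- Every finite nilpotent group admits a totally round cycle;
that is, every finite nilpotent group is round. -/
theorem statement1 (G : Type*) [Group G] [Finite G] (h : Group.IsNilpotent G) :
    IsRound G := by
  exact roundAux (Nat.card G) G h rfl
end

section
/- Let G be a finite group of order n. If G is k-round for some integer k > n², then G is nilpotent. -/
private lemma ofFn_ite_prod {G : Type*} [Monoid G] :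
    ∀ (km a b : ℕ), a + b = km → ∀ u v : G,
      (List.ofFn fun j : Fin km => if (j : ℕ) < a then u else v).prod = u ^ a * v ^ b := by
  intro km
  induction km with
  | zero =>
    intro a b hab u v
    obtain ⟨rfl, rfl⟩ : a = 0 ∧ b = 0 := by omega
    simp
  | succ m ih =>
    intro a b hab u v
    rw [List.ofFn_succ]
    cases a with
    | zero =>
      have hb : b = m + 1 := by omega
      subst hb
      simp only [Nat.not_lt_zero, if_false, List.prod_cons, List.ofFn_const,
        List.prod_replicate]
      rw [pow_zero, one_mul, pow_succ']
    | succ a' =>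
      have hab' : a' + b = m := by omega
      simp only [List.prod_cons]
      have h0 : ((0 : Fin (m+1)) : ℕ) < a' + 1 := by simp
      rw [if_pos h0]
      have htail : (fun j : Fin m => if ((j.succ : Fin (m+1)) : ℕ) < a' + 1 then u else v)
          = fun j : Fin m => if (j : ℕ) < a' then u else v := by
        funext j
        simp [Fin.val_succ, Nat.succ_lt_succ_iff]
      rw [htail, ih a' b hab' u v, ← mul_assoc, ← pow_succ']

private lemma key_count {G : Type*} [Group G] [Finite G] {k : ℕ} {g : ZMod (Nat.card G) → G}
    (hg : Function.Bijective g)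
    (hr : ∀ m : Fin k → ℤ,
      Function.Bijective fun i : ZMod (Nat.card G) =>
        (List.ofFn fun j : Fin k => g (i + (m j : ZMod (Nat.card G)))).prod)
    {a b : ℕ} (hab : a + b = k) (c : G) :
    Nat.card {q : G × G // q.1 ^ a * q.2 ^ b = c} = Nat.card G := by
  haveI : NeZero (Nat.card G) := ⟨Nat.card_pos.ne'⟩
  -- the twisted bijections
  have hbij : ∀ τ : ZMod (Nat.card G),
      Function.Bijective (fun i : ZMod (Nat.card G) => g i ^ a * g (i + τ) ^ b) := by
    intro τ
    have key := hr (fun j : Fin k => if (j : ℕ) < a then (0 : ℤ) else (τ.val : ℤ))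
    have hτ : ((τ.val : ℤ) : ZMod (Nat.card G)) = τ := by
      rw [Int.cast_natCast, ZMod.natCast_val, ZMod.cast_id]
    simp only [apply_ite (fun z : ℤ => (z : ZMod (Nat.card G))), Int.cast_zero, hτ] at key
    simp only [apply_ite, add_zero] at key
    simp only [ofFn_ite_prod k a b hab] at key
    exact key
  -- chain of equivalences
  have E1 : {p : ZMod (Nat.card G) × ZMod (Nat.card G) // g p.1 ^ a * g p.2 ^ b = c}
      ≃ {q : G × G // q.1 ^ a * q.2 ^ b = c} := by
    refine Equiv.subtypeEquiv
      (Equiv.prodCongr (Equiv.ofBijective g hg) (Equiv.ofBijective g hg)) (fun p => ?_)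
    rfl
  have E2 : {p : ZMod (Nat.card G) × ZMod (Nat.card G) // g p.1 ^ a * g (p.1 + p.2) ^ b = c}
      ≃ {p : ZMod (Nat.card G) × ZMod (Nat.card G) // g p.1 ^ a * g p.2 ^ b = c} := by
    refine Equiv.subtypeEquiv (Equiv.prodShear (Equiv.refl _) (fun i => Equiv.addLeft i))
      (fun p => ?_)
    rfl
  have E3 : {p : ZMod (Nat.card G) × ZMod (Nat.card G) // g p.1 ^ a * g (p.1 + p.2) ^ b = c}
      ≃ ZMod (Nat.card G) :=
    { toFun := fun p => p.1.2
      invFun := fun τ => ⟨((Equiv.ofBijective _ (hbij τ)).symm c, τ),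
        (Equiv.ofBijective _ (hbij τ)).apply_symm_apply c⟩
      left_inv := by
        rintro ⟨⟨i, τ⟩, hp⟩
        apply Subtype.ext
        apply Prod.ext
        · show (Equiv.ofBijective _ (hbij τ)).symm c = i
          rw [Equiv.symm_apply_eq]
          exact hp.symm
        · rfl
      right_inv := fun τ => rfl }
  calc Nat.card {q : G × G // q.1 ^ a * q.2 ^ b = c}
      = Nat.card {p : ZMod (Nat.card G) × ZMod (Nat.card G) // g p.1 ^ a * g (p.1 + p.2) ^ b = c} :=
        (Nat.card_congr ((E2.trans E1).symm))
    _ = Nat.card (ZMod (Nat.card G)) := Nat.card_congr E3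
    _ = Nat.card G := Nat.card_zmod _


private lemma eq_one_of_pow_coprime {G : Type*} [Group G] {m m' : ℕ} (hcop : Nat.Coprime m m')
    {z : G} (h1 : z ^ m = 1) (h2 : z ^ m' = 1) : z = 1 := by
  have d1 : orderOf z ∣ m := orderOf_dvd_iff_pow_eq_one.mpr h1
  have d2 : orderOf z ∣ m' := orderOf_dvd_iff_pow_eq_one.mpr h2
  have := Nat.dvd_gcd d1 d2
  rw [Nat.Coprime.gcd_eq_one hcop] at this
  exact orderOf_eq_one_iff.mp (Nat.dvd_one.mp this)

private lemma crt_exists {e u w : ℕ} (he : e ≠ 0) (hcop : Nat.Coprime u w)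
    (hu : u ∣ e) (hw : w ∣ e) (r : ℕ) :
    ∃ a : ℕ, e ≤ a ∧ a < 2 * e ∧ u ∣ a ∧ a ≡ r [MOD w] := by
  obtain ⟨z, hz0, hzr⟩ := Nat.chineseRemainder hcop 0 r
  have hze : z % e < e := Nat.mod_lt z (Nat.pos_of_ne_zero he)
  refine ⟨z % e + e, by omega, by omega, ?_, ?_⟩
  · have huz : u ∣ z := (Nat.modEq_zero_iff_dvd).mp hz0
    exact dvd_add ((Nat.dvd_mod_iff hu).mpr huz) hu
  · have h1 : z % e ≡ z [MOD w] := Nat.ModEq.of_dvd hw (Nat.mod_modEq z e)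
    have h2 : e ≡ 0 [MOD w] := (Nat.modEq_zero_iff_dvd).mpr hw
    calc z % e + e ≡ z + 0 [MOD w] := Nat.ModEq.add h1 h2
      _ = z := by omega
      _ ≡ r [MOD w] := hzr

private lemma commute_parts {G : Type*} [Group G] [Finite G] {k : ℕ}
    {g : ZMod (Nat.card G) → G} (hg : Function.Bijective g)
    (hr : ∀ m : Fin k → ℤ,
      Function.Bijective fun i : ZMod (Nat.card G) =>
        (List.ofFn fun j : Fin k => g (i + (m j : ZMod (Nat.card G)))).prod)
    (hk : Nat.card G ^ 2 < k) (hn2 : 2 ≤ Nat.card G) (hcop : Nat.Coprime k (Nat.card G))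
    (p : ℕ) [hp : Fact p.Prime] :
    ∀ u w : G, u ^ (p ^ (Monoid.exponent G).factorization p) = 1 →
      w ^ (ordCompl[p] (Monoid.exponent G)) = 1 → Commute u w := by
  set n := Nat.card G with hn
  set e := Monoid.exponent G with he
  set v := e.factorization p with hv
  set ep := p ^ v with hep
  set ep' := ordCompl[p] e with hep'
  have he0 : e ≠ 0 := Monoid.exponent_ne_zero_of_finite
  have hee : ep * ep' = e := Nat.ordProj_mul_ordCompl_eq_self e p
  have hcop_p : Nat.Coprime p ep' := Nat.coprime_ordCompl hp.out he0
  have hcop2 : Nat.Coprime ep ep' := Nat.Coprime.pow_left v hcop_p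
  have hxe : ∀ x : G, x ^ e = 1 := fun x => Monoid.pow_exponent_eq_one x
  have hepdvd : ep ∣ e := Nat.ordProj_dvd e p
  have hep'dvd : ep' ∣ e := Nat.ordCompl_dvd e p
  have hn0 : 0 < n := by omega
  have hedvdn : e ∣ n := Group.exponent_dvd_nat_card
  have hen : e ≤ n := Nat.le_of_dvd hn0 hedvdn
  have h2e : 2 * e < k := by
    have hnn : n ^ 2 = n * n := sq n
    nlinarith
  have he1 : 1 ≤ e := Nat.pos_of_ne_zero he0
  -- helpers
  have pow_helper : ∀ (x : G) (c : ℕ), ep' ∣ c → (x ^ c) ^ ep = 1 := by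
    rintro x c ⟨d, rfl⟩
    rw [← pow_mul]
    have hmul : ep' * d * ep = e * d := by rw [← hee]; ring
    rw [hmul, pow_mul, hxe, one_pow]
  have pow_helper' : ∀ (x : G) (c : ℕ), ep ∣ c → (x ^ c) ^ ep' = 1 := by
    rintro x c ⟨d, rfl⟩
    rw [← pow_mul]
    have hmul : ep * d * ep' = e * d := by rw [← hee]; ring
    rw [hmul, pow_mul, hxe, one_pow]
  -- choose exponents a, b
  obtain ⟨a, hae, ha2e, hadvd, hamod⟩ := crt_exists he0 hcop2.symm hep'dvd hepdvd k
  have hak : a < k := by omega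
  set b := k - a with hb
  have hab : a + b = k := by omega
  have hb1 : 1 ≤ b := by omega
  have hepb : ep ∣ b := by
    have h3 : a + b ≡ a + 0 [MOD ep] := by
      rw [hab, add_zero]
      exact hamod.symm
    exact (Nat.modEq_zero_iff_dvd).mp (Nat.ModEq.add_left_cancel' a h3)
  -- characterize solution sets
  have hxa : ∀ x : G, x ^ a = 1 ↔ x ^ ep' = 1 := by
    intro x
    constructor
    · intro hx
      have hda : orderOf x ∣ a := orderOf_dvd_iff_pow_eq_one.mpr hx
      have hde : orderOf x ∣ e := Monoid.order_dvd_exponent x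
      have hnotp : ¬ p ∣ orderOf x := by
        intro hpord
        have hpa : p ∣ a := hpord.trans hda
        have hpe : p ∣ e := hpord.trans hde
        have hv1 : 0 < v := by
          rw [hv]
          exact Nat.Prime.factorization_pos_of_dvd hp.out he0 hpe
        have hpep : p ∣ ep := dvd_pow_self p hv1.ne'
        have hpb : p ∣ b := hpep.trans hepb
        have hpk : p ∣ k := hab ▸ dvd_add hpa hpb
        have hpn : p ∣ n := hpord.trans (orderOf_dvd_natCard x)
        have : p ∣ 1 := hcop ▸ Nat.dvd_gcd hpk hpn
        exact hp.out.one_lt.ne' (Nat.dvd_one.mp this)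
      have hcopd : Nat.Coprime (orderOf x) ep :=
        Nat.Coprime.pow_right v (((Nat.Prime.coprime_iff_not_dvd hp.out).mpr hnotp).symm)
      have : orderOf x ∣ ep' * ep := by
        rw [mul_comm, hee]
        exact hde
      exact orderOf_dvd_iff_pow_eq_one.mp (Nat.Coprime.dvd_of_dvd_mul_right hcopd this)
    · intro hx
      exact orderOf_dvd_iff_pow_eq_one.mp
        ((orderOf_dvd_iff_pow_eq_one.mpr hx).trans hadvd)
  have hxb : ∀ x : G, x ^ b = 1 ↔ x ^ ep = 1 := by
    intro x
    constructor
    · intro hx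
      have hda : orderOf x ∣ b := orderOf_dvd_iff_pow_eq_one.mpr hx
      have hde : orderOf x ∣ e := Monoid.order_dvd_exponent x
      have hcopd : Nat.Coprime (orderOf x) ep' := by
        by_contra hnc
        obtain ⟨q, hq, hqord, hqep'⟩ := Nat.Prime.not_coprime_iff_dvd.mp hnc
        have hqb : q ∣ b := hqord.trans hda
        have hqa : q ∣ a := hqep'.trans hadvd
        have hqk : q ∣ k := hab ▸ dvd_add hqa hqb
        have hqn : q ∣ n := hqord.trans (orderOf_dvd_natCard x)
        have : q ∣ 1 := hcop ▸ Nat.dvd_gcd hqk hqn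
        exact hq.one_lt.ne' (Nat.dvd_one.mp this)
      have : orderOf x ∣ ep * ep' := by rw [hee]; exact hde
      exact orderOf_dvd_iff_pow_eq_one.mp (Nat.Coprime.dvd_of_dvd_mul_right hcopd this)
    · intro hx
      exact orderOf_dvd_iff_pow_eq_one.mp
        ((orderOf_dvd_iff_pow_eq_one.mpr hx).trans hepb)
  -- counting
  have hcount := key_count hg hr hab (1 : G)
  have hsplit : ∀ q : G × G, (q.1 ^ a * q.2 ^ b = 1) ↔ (q.1 ^ ep' = 1 ∧ q.2 ^ ep = 1) := by
    rintro ⟨x, y⟩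
    constructor
    · intro hq
      have hzinv : x ^ a = (y ^ b)⁻¹ := by
        rw [eq_inv_iff_mul_eq_one]
        exact hq
      have hz1 : (x ^ a) ^ ep = 1 := pow_helper x a hadvd
      have hz2 : (x ^ a) ^ ep' = 1 := by
        rw [hzinv, inv_pow, pow_helper' y b hepb, inv_one]
      have hxa1 : x ^ a = 1 := eq_one_of_pow_coprime hcop2 hz1 hz2
      have hyb1 : y ^ b = 1 := by
        rw [hxa1, one_mul] at hq
        exact hq
      exact ⟨(hxa x).mp hxa1, (hxb y).mp hyb1⟩
    · rintro ⟨h1, h2⟩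
      rw [(hxa x).mpr h1, (hxb y).mpr h2, one_mul]
  have hEs : {q : G × G // q.1 ^ a * q.2 ^ b = 1}
      ≃ {x : G // x ^ ep' = 1} × {y : G // y ^ ep = 1} :=
    (Equiv.subtypeEquivRight hsplit).trans
      (Equiv.subtypeProdEquivProd (p := fun x : G => x ^ ep' = 1) (q := fun y : G => y ^ ep = 1))
  have hNN : Nat.card {x : G // x ^ ep' = 1} * Nat.card {y : G // y ^ ep = 1} = n := by
    rw [← Nat.card_prod, ← Nat.card_congr hEs, hcount]
  -- decomposition exponents
  obtain ⟨c1, hc1e, hc12e, hc1dvd, hc1mod⟩ := crt_exists he0 hcop2.symm hep'dvd hepdvd 1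
  obtain ⟨c2, hc2e, hc22e, hc2dvd, hc2mod⟩ := crt_exists he0 hcop2 hepdvd hep'dvd 1
  have hsum : ∀ x : G, x ^ c1 * x ^ c2 = x := by
    intro x
    have hm1 : c1 + c2 ≡ 1 + 0 [MOD ep] :=
      Nat.ModEq.add hc1mod ((Nat.modEq_zero_iff_dvd).mpr hc2dvd)
    have hm2 : c1 + c2 ≡ 0 + 1 [MOD ep'] :=
      Nat.ModEq.add ((Nat.modEq_zero_iff_dvd).mpr hc1dvd) hc2mod
    rw [add_zero] at hm1
    rw [zero_add] at hm2
    have hm : c1 + c2 ≡ 1 [MOD e] := by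
      rw [← hee]
      exact (Nat.modEq_and_modEq_iff_modEq_mul hcop2).mp ⟨hm1, hm2⟩
    have h1le : 1 ≤ c1 + c2 := by omega
    obtain ⟨m, hm'⟩ := (Nat.modEq_iff_dvd' h1le).mp hm.symm
    have hc : c1 + c2 = e * m + 1 := by omega
    rw [← pow_add, hc, pow_add, pow_mul, hxe, one_pow, one_mul, pow_one]
  set φ : G → {x : G // x ^ ep' = 1} × {y : G // y ^ ep = 1} :=
    fun x => (⟨x ^ c2, pow_helper' x c2 hc2dvd⟩, ⟨x ^ c1, pow_helper x c1 hc1dvd⟩) with hφ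
  have hφinj : Function.Injective φ := by
    intro x y hxy
    have h1 : x ^ c2 = y ^ c2 := congrArg (fun t => (t.1 : G)) hxy
    have h2 : x ^ c1 = y ^ c1 := congrArg (fun t => (t.2 : G)) hxy
    rw [← hsum x, ← hsum y, h1, h2]
  have hφbij : Function.Bijective φ :=
    (Nat.bijective_iff_injective_and_card φ).mpr ⟨hφinj, by rw [Nat.card_prod, hNN]⟩
  intro u w hu hw
  obtain ⟨x, hx⟩ := hφbij.surjective (⟨w, hw⟩, ⟨u, hu⟩)
  have h1 : x ^ c2 = w := congrArg (fun t => (t.1 : G)) hx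
  have h2 : x ^ c1 = u := congrArg (fun t => (t.2 : G)) hx
  rw [← h1, ← h2]
  exact Commute.pow_pow_self x c1 c2


private lemma sylow_normal_of_commute {G : Type*} [Group G] [Finite G] (p : ℕ) [hp : Fact p.Prime]
    (hcomm : ∀ u w : G, u ^ (p ^ (Monoid.exponent G).factorization p) = 1 →
      w ^ (ordCompl[p] (Monoid.exponent G)) = 1 → Commute u w)
    (P : Sylow p G) : (↑P : Subgroup G).Normal := by
  set e := Monoid.exponent G with he
  set v := e.factorization p with hv
  set ep := p ^ v with hep
  set ep' := ordCompl[p] e with hep'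
  have he0 : e ≠ 0 := Monoid.exponent_ne_zero_of_finite
  have hee : ep * ep' = e := Nat.ordProj_mul_ordCompl_eq_self e p
  have hcop_p : Nat.Coprime p ep' := Nat.coprime_ordCompl hp.out he0
  have hcop2 : Nat.Coprime ep ep' := Nat.Coprime.pow_left v hcop_p
  have hxe : ∀ x : G, x ^ e = 1 := fun x => Monoid.pow_exponent_eq_one x
  have hppow : ∀ x : G, (∃ m, x ^ p ^ m = 1) → x ^ ep = 1 := by
    rintro x ⟨m, hm⟩
    have h1 : orderOf x ∣ p ^ m := orderOf_dvd_iff_pow_eq_one.mpr hm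
    have h2 : orderOf x ∣ e := Monoid.order_dvd_exponent x
    obtain ⟨j, hj, hx⟩ := (Nat.dvd_prime_pow hp.out).mp h1
    have hjv : j ≤ v := by
      rw [hv]
      exact (Nat.Prime.pow_dvd_iff_le_factorization hp.out he0).mp (hx ▸ h2)
    exact orderOf_dvd_iff_pow_eq_one.mp (dvd_trans (hx ▸ dvd_refl _) (Nat.pow_dvd_pow p hjv))
  have hcoprime_parts : ∀ z : G, z ^ ep = 1 → z ^ ep' = 1 → z = 1 := by
    intro z h1 h2
    have d1 : orderOf z ∣ ep := orderOf_dvd_iff_pow_eq_one.mpr h1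
    have d2 : orderOf z ∣ ep' := orderOf_dvd_iff_pow_eq_one.mpr h2
    have := Nat.dvd_gcd d1 d2
    rw [Nat.Coprime.gcd_eq_one hcop2] at this
    exact orderOf_eq_one_iff.mp (Nat.dvd_one.mp this)
  -- the subgroup generated by p-elements
  set H := Subgroup.closure {x : G | x ^ ep = 1} with hH
  have hmemH : ∀ x : G, x ^ ep = 1 → x ∈ H := fun x hx => Subgroup.subset_closure hx
  have central : ∀ w : G, w ^ ep' = 1 → ∀ x, x ∈ H → Commute w x := by
    intro w hw x hx
    have hle : H ≤ Subgroup.centralizer {w} := by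
      rw [hH]
      apply (Subgroup.closure_le _).mpr
      intro u hu
      rw [SetLike.mem_coe, Subgroup.mem_centralizer_iff]
      intro h hh
      rw [Set.mem_singleton_iff] at hh
      subst hh
      exact ((hcomm u h hu hw).symm : h * u = u * h)
    have hx2 := hle hx
    rw [Subgroup.mem_centralizer_iff] at hx2
    exact (hx2 w (Set.mem_singleton w) : w * x = x * w)
  -- the subgroup of p'-elements of H
  set A : Subgroup G :=
    { carrier := {x : G | x ∈ H ∧ x ^ ep' = 1}
      one_mem' := ⟨H.one_mem, one_pow _⟩
      mul_mem' := by
        rintro x y ⟨hxH, hx⟩ ⟨hyH, hy⟩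
        refine ⟨H.mul_mem hxH hyH, ?_⟩
        rw [(central x hx y hyH).mul_pow, hx, hy, one_mul]
      inv_mem' := by
        rintro x ⟨hxH, hx⟩
        exact ⟨H.inv_mem hxH, by rw [inv_pow, hx, inv_one]⟩ } with hA
  have hmemA : ∀ x : G, x ∈ A ↔ x ∈ H ∧ x ^ ep' = 1 := fun x => Iff.rfl
  haveI hKnorm : (A.subgroupOf H).Normal := by
    constructor
    intro a ha h
    rw [Subgroup.mem_subgroupOf] at ha ⊢
    have haA := (hmemA _).mp ha
    have hcom : Commute (a : G) (h : G) := central a haA.2 h (SetLike.coe_mem h)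
    have hconj : ((h * a * h⁻¹ : H) : G) = (a : G) := by
      push_cast
      rw [← hcom.eq, mul_inv_cancel_right]
    rw [hconj]
    exact ha
  have hQp : IsPGroup p (H ⧸ A.subgroupOf H) := by
    intro q
    refine ⟨v, ?_⟩
    induction q using QuotientGroup.induction_on with
    | _ x =>
      rw [← QuotientGroup.mk_pow, QuotientGroup.eq_one_iff, Subgroup.mem_subgroupOf]
      refine (hmemA _).mpr ⟨SetLike.coe_mem _, ?_⟩
      push_cast
      rw [← pow_mul, hee]
      exact hxe _
  have hKp : ¬ p ∣ Nat.card (A.subgroupOf H) := by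
    intro hdvd
    haveI : Fintype (A.subgroupOf H) := Fintype.ofFinite _
    obtain ⟨y, hy⟩ := exists_prime_orderOf_dvd_card (G := (A.subgroupOf H)) p
      (by rwa [← Nat.card_eq_fintype_card])
    set f : (A.subgroupOf H) →* G := H.subtype.comp (A.subgroupOf H).subtype with hf
    have hfinj : Function.Injective f :=
      (Subgroup.subtype_injective H).comp (Subgroup.subtype_injective _)
    have hyord : orderOf (f y) = p := by rw [orderOf_injective f hfinj y, hy]
    have hyA : (f y) ∈ A := by
      have := Subgroup.mem_subgroupOf.mp (SetLike.coe_mem y)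
      exact this
    have : (f y) ^ ep' = 1 := ((hmemA _).mp hyA).2
    have hdvd' : p ∣ ep' := hyord ▸ orderOf_dvd_iff_pow_eq_one.mpr this
    have h1 : p ∣ 1 := hcop_p ▸ Nat.dvd_gcd (dvd_refl p) hdvd'
    exact hp.out.one_lt.ne' (Nat.dvd_one.mp h1)
  obtain ⟨s, hs⟩ := IsPGroup.iff_card.mp hQp
  have hcardH : Nat.card H = p ^ s * Nat.card (A.subgroupOf H) := by
    rw [Subgroup.card_eq_card_quotient_mul_card_subgroup (A.subgroupOf H), hs]
  obtain ⟨Q⟩ : Nonempty (Sylow p H) := inferInstance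
  have hcardQ : Nat.card Q = p ^ s := by
    rw [Sylow.card_eq_multiplicity]
    congr 1
    rw [hcardH, Nat.factorization_mul (pow_ne_zero s hp.out.ne_zero) Nat.card_pos.ne']
    simp [Nat.Prime.factorization_pow, Nat.factorization_eq_zero_of_not_dvd hKp,
      hp.out.factorization]
  set ψ : Q →* H ⧸ A.subgroupOf H :=
    (QuotientGroup.mk' (A.subgroupOf H)).comp (Subgroup.subtype (Q : Subgroup H)) with hψ
  have hψinj : Function.Injective ψ := by
    rw [← MonoidHom.ker_eq_bot_iff]
    rw [Subgroup.eq_bot_iff_forall]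
    intro q hq
    rw [MonoidHom.mem_ker] at hq
    have hqK : ((q : H)) ∈ A.subgroupOf H := (QuotientGroup.eq_one_iff _).mp hq
    have hqA : ((q : H) : G) ∈ A := Subgroup.mem_subgroupOf.mp hqK
    obtain ⟨m, hm⟩ := Q.isPGroup' q
    have hz1 : ((q : H) : G) ^ p ^ m = 1 := by
      have := congrArg (fun t : Q => ((t : H) : G)) hm
      push_cast at this
      exact this
    have hzep : ((q : H) : G) ^ ep = 1 := hppow _ ⟨m, hz1⟩
    have hz : ((q : H) : G) = 1 := hcoprime_parts _ hzep ((hmemA _).mp hqA).2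
    have : (q : H) = 1 := by exact_mod_cast hz
    exact_mod_cast this
  have hψsurj : Function.Surjective ψ := by
    have : Function.Bijective ψ :=
      (Nat.bijective_iff_injective_and_card ψ).mpr ⟨hψinj, by rw [hcardQ, hs]⟩
    exact this.surjective
  -- the image subgroup: precisely the p-elements of G
  have hQ'mem : ∀ x : G, x ∈ (Q : Subgroup H).map H.subtype ↔ x ^ ep = 1 := by
    intro x
    constructor
    · rintro ⟨q, hq, rfl⟩
      obtain ⟨m, hm⟩ := Q.isPGroup' ⟨q, hq⟩
      apply hppow
      refine ⟨m, ?_⟩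
      have := congrArg (fun t : Q => ((t : H) : G)) hm
      push_cast at this
      exact this
    · intro hx
      set xH : H := ⟨x, hmemH x hx⟩ with hxH
      obtain ⟨q, hq⟩ := hψsurj (QuotientGroup.mk xH)
      have hq' : (QuotientGroup.mk ((q : H)) : H ⧸ A.subgroupOf H) = QuotientGroup.mk xH := hq
      have hk' : ((q : H))⁻¹ * xH ∈ A.subgroupOf H := (QuotientGroup.eq).mp hq'
      have ha0 : (((q : H))⁻¹ * xH : H) ∈ A.subgroupOf H := hk'
      set qg : G := ((q : H) : G) with hqg
      have ha0A : (qg⁻¹ * x) ∈ A := by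
        have := Subgroup.mem_subgroupOf.mp ha0
        push_cast at this
        exact this
      have ha0pair := (hmemA _).mp ha0A
      have hqgH : qg ∈ H := SetLike.coe_mem _
      have hqgep : qg ^ ep = 1 := by
        obtain ⟨m, hm⟩ := Q.isPGroup' q
        apply hppow
        refine ⟨m, ?_⟩
        have := congrArg (fun t : Q => ((t : H) : G)) hm
        push_cast at this
        exact this
      -- a0 commutes with qg⁻¹ and x
      have hca : Commute (qg⁻¹ * x) qg := central _ ha0pair.2 qg hqgH
      have hcx : Commute qg⁻¹ x := by
        have h1 : Commute qg⁻¹ (qg⁻¹ * x) := (hca.symm).inv_left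
        have h2 : Commute qg⁻¹ (qg * (qg⁻¹ * x)) := ((Commute.refl qg).inv_left).mul_right h1
        rwa [mul_inv_cancel_left] at h2
      have ha0ep : (qg⁻¹ * x) ^ ep = 1 := by
        rw [hcx.mul_pow, inv_pow, hqgep, inv_one, one_mul, hx]
      have ha0one : qg⁻¹ * x = 1 := hcoprime_parts _ ha0ep ha0pair.2
      have hxq : x = qg := by
        have := congrArg (fun t => qg * t) ha0one
        simpa using this
      rw [hxq]
      exact Subgroup.mem_map.mpr ⟨(q : H), SetLike.coe_mem q, rfl⟩
  have hQ'pgroup : IsPGroup p ((Q : Subgroup H).map H.subtype) := by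
    intro q'
    refine ⟨v, ?_⟩
    have hq' := (hQ'mem (q' : G)).mp (SetLike.coe_mem q')
    apply Subtype.ext
    push_cast
    exact hq'
  have hPle : (P : Subgroup G) ≤ (Q : Subgroup H).map H.subtype := by
    intro x hx
    rw [hQ'mem]
    obtain ⟨m, hm⟩ := P.isPGroup' ⟨x, hx⟩
    apply hppow
    refine ⟨m, ?_⟩
    have := congrArg (fun t : P => (t : G)) hm
    push_cast at this
    exact this
  have hQP : (Q : Subgroup H).map H.subtype = ↑P := P.is_maximal' hQ'pgroup hPle
  rw [← hQP]
  constructor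
  intro x hx γ
  rw [hQ'mem] at hx ⊢
  rw [conj_pow, hx, mul_one, mul_inv_cancel]


/-- Let `G` be a finite group of order `n`. If `G` is `k`-round for some `k > n²`,
then `G` is nilpotent. -/
theorem statement2 (G : Type*) [Group G] [Finite G] (k : ℕ)
    (hk : Nat.card G ^ 2 < k) (h : IsKRound G k) :
    Group.IsNilpotent G := by
  obtain ⟨g, hr⟩ := h
  rcases eq_or_ne (Nat.card G) 1 with h1 | h1
  · haveI : Subsingleton G := (Nat.card_eq_one_iff_unique.mp h1).1
    refine ⟨⟨0, ?_⟩⟩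
    rw [upperCentralSeries_zero]
    exact (Subgroup.eq_top_iff' _).mpr fun x => by
      rw [Subsingleton.elim x 1]; exact Subgroup.one_mem ⊥
  · have hn2 : 2 ≤ Nat.card G := by have := Nat.card_pos (α := G); omega
    haveI : NeZero (Nat.card G) := ⟨by omega⟩
    have hk0 := hr (fun _ => (0 : ℤ))
    have hk0' : Function.Bijective (fun i : ZMod (Nat.card G) => g i ^ k) := by
      simpa only [Int.cast_zero, add_zero, List.ofFn_const, List.prod_replicate] using hk0
    have hginj : Function.Injective g := by
      intro i j hij
      exact hk0'.injective (by simp only [hij])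
    have hg : Function.Bijective g :=
      (Nat.bijective_iff_injective_and_card g).mpr ⟨hginj, by rw [Nat.card_zmod]⟩
    have hpowbij : Function.Bijective (fun x : G => x ^ k) := by
      have hcomp : (fun x : G => x ^ k) ∘ g = fun i => g i ^ k := rfl
      rw [← Function.Bijective.of_comp_iff (fun x : G => x ^ k) hg, hcomp]
      exact hk0'
    have hcop : Nat.Coprime k (Nat.card G) := by
      by_contra hnc
      obtain ⟨p, hp, hpk, hpn⟩ := Nat.Prime.not_coprime_iff_dvd.mp hnc
      haveI : Fact p.Prime := ⟨hp⟩
      haveI := Fintype.ofFinite G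
      obtain ⟨x, hx⟩ := exists_prime_orderOf_dvd_card (G := G) p
        (by rw [← Nat.card_eq_fintype_card]; exact hpn)
      have hxk : x ^ k = 1 := orderOf_dvd_iff_pow_eq_one.mp (hx ▸ hpk)
      have hx1 : x = 1 := hpowbij.injective (by
        show x ^ k = 1 ^ k
        rw [hxk, one_pow])
      rw [hx1, orderOf_one] at hx
      exact hp.one_lt.ne' hx.symm
    have hnormal : ∀ (p : ℕ) (_hp : Fact p.Prime) (P : Sylow p G),
        (↑P : Subgroup G).Normal := by
      intro p hp P
      haveI := hp
      exact sylow_normal_of_commute p (commute_parts hg hr hk hn2 hcop p) P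
    exact ((isNilpotent_of_finite_tfae (G := G)).out 3 0).mp hnormal
end

section
/- Let G be a finite group of order n and k ≥ 1 an integer with gcd(k,n) > 1. Then G is not k-round. (Indeed, if p is any prime divisor of gcd(k,n) and g is any 1-1 cycle of length n over G, then the cycle i ↦ g(i)^k takes the value 1 at least p times.) -/
/-- Let `G` be a finite group of order `n` and `k ≥ 1` with `gcd(k, n) > 1`. Then `G` is
not `k`-round. Indeed, for any prime `p` dividing `gcd(k, n)` and any 1-1 cycle `g` of
length `n` over `G`, the cycle `i ↦ g(i)^k` takes the value `1` at least `p` times. -/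
theorem statement4 (G : Type*) [Group G] [Finite G] (k : ℕ) (hk : 1 ≤ k)
    (h : 1 < Nat.gcd k (Nat.card G)) :
    ¬ IsKRound G k ∧
      ∀ p : ℕ, p.Prime → p ∣ Nat.gcd k (Nat.card G) →
        ∀ g : ZMod (Nat.card G) → G, Function.Bijective g →
          p ≤ Nat.card {i : ZMod (Nat.card G) // g i ^ k = 1} := by
  have hn : 0 < Nat.card G := Nat.card_pos
  have : NeZero (Nat.card G) := ⟨hn.ne'⟩
  have key : ∀ p : ℕ, p.Prime → p ∣ Nat.gcd k (Nat.card G) →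
      ∀ g : ZMod (Nat.card G) → G, Function.Bijective g →
        p ≤ Nat.card {i : ZMod (Nat.card G) // g i ^ k = 1} := by
    intro p hp hpd g hg
    have hpk : p ∣ k := hpd.trans (Nat.gcd_dvd_left _ _)
    have hpn : p ∣ Nat.card G := hpd.trans (Nat.gcd_dvd_right _ _)
    have : Fact p.Prime := ⟨hp⟩
    obtain ⟨a, ha⟩ := exists_prime_orderOf_dvd_card' (G := G) p hpn
    have hak : a ^ k = 1 := orderOf_dvd_iff_pow_eq_one.mp (ha ▸ hpk)
    set e := Equiv.ofBijective g hg with he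
    have hge : ∀ x : G, g (e.symm x) = x := fun x => e.apply_symm_apply x
    have hmap : ∀ x : Subgroup.zpowers a, g (e.symm (x : G)) ^ k = 1 := by
      intro x
      rw [hge]
      obtain ⟨m, hm⟩ := Subgroup.mem_zpowers_iff.mp x.2
      rw [← hm, ← zpow_natCast, ← zpow_mul, mul_comm, zpow_mul, zpow_natCast, hak, one_zpow]
    have hinj : Function.Injective
        (fun x : Subgroup.zpowers a =>
          (⟨e.symm (x : G), hmap x⟩ : {i : ZMod (Nat.card G) // g i ^ k = 1})) := by
      intro x y hxy
      exact Subtype.ext (e.symm.injective (congrArg Subtype.val hxy))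
    calc p = Nat.card (Subgroup.zpowers a) := by rw [Nat.card_zpowers, ha]
      _ ≤ _ := Nat.card_le_card_of_injective _ hinj
  refine ⟨?_, key⟩
  rintro ⟨g, hg⟩
  have hbij := hg (fun _ => 0)
  simp only [Int.cast_zero, add_zero, List.ofFn_const, List.prod_replicate] at hbij
  have hginj : Function.Injective g := fun i j hij => hbij.injective (by simp [hij])
  have : Fintype G := Fintype.ofFinite G
  have hgbij : Function.Bijective g := by
    rw [Fintype.bijective_iff_injective_and_card]
    exact ⟨hginj, by simp [ZMod.card, Nat.card_eq_fintype_card]⟩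
  set p := (Nat.gcd k (Nat.card G)).minFac with hp
  have hpp : p.Prime := Nat.minFac_prime (by omega)
  have hle := key p hpp (Nat.minFac_dvd _) g hgbij
  have hss : Subsingleton {i : ZMod (Nat.card G) // g i ^ k = 1} :=
    ⟨fun x y => Subtype.ext (hbij.injective (x.2.trans y.2.symm))⟩
  have : Nat.card {i : ZMod (Nat.card G) // g i ^ k = 1} ≤ 1 := by
    calc Nat.card {i : ZMod (Nat.card G) // g i ^ k = 1}
        ≤ Nat.card (Fin 1) := Nat.card_le_card_of_injective (fun _ => 0)
          (fun a b _ => hss.elim a b)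
      _ = 1 := by simp
  have := hpp.two_le
  omega
end

section
/- Let G be a finite group of order n, and let k, l ≥ 1 be integers with l dividing k. If a cycle g of length n over G is k-round, then g is l-round. In particular, if G is k-round then G is l-round. -/
lemma roundAux_s5 {M : Type*} [Monoid M] {l : ℕ} (hl : 0 < l) (f : Fin l → M) :
    ∀ d : ℕ,
      (List.ofFn fun j : Fin (l * d) => f ⟨(j : ℕ) % l, Nat.mod_lt _ hl⟩).prod
        = (List.ofFn f).prod ^ d := by
  intro d
  induction d with
  | zero => simp
  | succ d ih =>
    have h2 : (List.ofFn fun j : Fin l =>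
        f ⟨(l * d + (j : ℕ)) % l, Nat.mod_lt _ hl⟩) = List.ofFn f := by
      congr 1
      funext j
      congr 1
      apply Fin.ext
      simp [Nat.mul_add_mod, Nat.mod_eq_of_lt j.isLt]
    have : (List.ofFn fun j : Fin (l * d + l) => f ⟨(j : ℕ) % l, Nat.mod_lt _ hl⟩).prod
        = (List.ofFn f).prod ^ d * (List.ofFn f).prod := by
      rw [List.ofFn_add, List.prod_append]
      simp only [Fin.coe_castAdd, Fin.coe_natAdd, Fin.val_castLE]
      rw [ih, h2]
    simpa [Nat.mul_succ, pow_succ] using this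

/-- If `l ∣ k` and a cycle `g` of length `n` over `G` is `k`-round, then `g` is `l`-round.
In particular, if `G` is `k`-round then `G` is `l`-round. -/
theorem statement5 (G : Type*) [Group G] [Finite G] (k l : ℕ) (hk : 1 ≤ k) (hl : 1 ≤ l)
    (hdvd : l ∣ k) :
    (∀ g : ZMod (Nat.card G) → G, IsRoundCycle G k g → IsRoundCycle G l g) ∧
      (IsKRound G k → IsKRound G l) := by
  have hl' : 0 < l := hl
  obtain ⟨d, rfl⟩ := hdvd
  have main : ∀ g : ZMod (Nat.card G) → G, IsRoundCycle G (l * d) g → IsRoundCycle G l g := by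
    intro g hg m
    have hinj : Function.Injective fun i : ZMod (Nat.card G) =>
        (List.ofFn fun j : Fin l => g (i + (m j : ZMod (Nat.card G)))).prod := by
      intro i1 i2 h12
      have hbij := hg (fun j : Fin (l * d) => m ⟨(j : ℕ) % l, Nat.mod_lt _ hl'⟩)
      have key : ∀ i : ZMod (Nat.card G),
          (List.ofFn fun j : Fin (l * d) =>
            g (i + ((m ⟨(j : ℕ) % l, Nat.mod_lt _ hl'⟩ : ℤ) : ZMod (Nat.card G)))).prod
          = ((List.ofFn fun j : Fin l => g (i + (m j : ZMod (Nat.card G)))).prod) ^ d :=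
        fun i => roundAux_s5 hl' (fun j : Fin l => g (i + (m j : ZMod (Nat.card G)))) d
      simp only at h12
      apply hbij.injective
      show (List.ofFn fun j : Fin (l * d) =>
          g (i1 + ((m ⟨(j : ℕ) % l, Nat.mod_lt _ hl'⟩ : ℤ) : ZMod (Nat.card G)))).prod
        = (List.ofFn fun j : Fin (l * d) =>
          g (i2 + ((m ⟨(j : ℕ) % l, Nat.mod_lt _ hl'⟩ : ℤ) : ZMod (Nat.card G)))).prod
      rw [key i1, key i2, h12]
    have hcard : Nat.card (ZMod (Nat.card G)) = Nat.card G := by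
      have : NeZero (Nat.card G) := ⟨Nat.card_pos.ne'⟩
      simp [Nat.card_zmod]
    exact (Nat.bijective_iff_injective_and_card _).mpr ⟨hinj, hcard⟩
  refine ⟨main, ?_⟩
  rintro ⟨g, hg⟩
  exact ⟨g, main g hg⟩
end

section
/- Let n ≥ 2 be an integer with prime power factorization n = p₁^{e₁} p₂^{e₂} ⋯ p_r^{e_r} (the p_i distinct primes), and set b_i = n / p_i^{e_i} for 1 ≤ i ≤ r. Then every integer k > n² can be written as k = c₁ b₁ + c₂ b₂ + ⋯ + c_r b_r with nonnegative integers c₁, …, c_r; that is, the Frobenius number of {b₁, …, b_r} is at most n². -/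
/-- Let `n ≥ 2` have prime power factorization `n = p₁^{e₁} ⋯ p_r^{e_r}`, and set
`b_i = n / p_i^{e_i}`. Every integer `k > n²` can be written as
`k = c₁ b₁ + ⋯ + c_r b_r` with nonnegative integers `c_i`; that is, the Frobenius
number of `{b₁, …, b_r}` is at most `n²`. -/
theorem statement7 (n : ℕ) (hn : 2 ≤ n) (k : ℕ) (hk : n ^ 2 < k) :
    ∃ c : ℕ → ℕ, k = ∑ p ∈ n.primeFactors, c p * (n / p ^ (n.factorization p)) := by
  classical
  have hn0 : n ≠ 0 := by omega
  set F := n.primeFactors with hF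
  set q : ℕ → ℕ := fun p => p ^ (n.factorization p) with hq
  set b : ℕ → ℕ := fun p => n / q p with hb
  have hqpos : ∀ p ∈ F, 0 < q p := fun p hp =>
    pow_pos (Nat.prime_of_mem_primeFactors hp).pos _
  have hqb : ∀ p ∈ F, q p * b p = n := fun p hp =>
    Nat.ordProj_mul_ordCompl_eq_self n p
  have hbcop : ∀ p ∈ F, Nat.Coprime (b p) (q p) := by
    intro p hp
    exact ((Nat.coprime_ordCompl (Nat.prime_of_mem_primeFactors hp) hn0).symm).pow_right _
  set c0 : ℕ → ℕ := fun p => ((k : ZMod (q p)) * (b p : ZMod (q p))⁻¹).val with hc0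
  have hc0lt : ∀ p ∈ F, c0 p < q p := by
    intro p hp
    haveI : NeZero (q p) := ⟨(hqpos p hp).ne'⟩
    exact ZMod.val_lt _
  have hmod : ∀ p ∈ F, c0 p * b p ≡ k [MOD q p] := by
    intro p hp
    haveI : NeZero (q p) := ⟨(hqpos p hp).ne'⟩
    have hu : IsUnit ((b p : ZMod (q p))) :=
      (ZMod.isUnit_iff_coprime _ _).mpr (hbcop p hp)
    have : ((c0 p * b p : ℕ) : ZMod (q p)) = (k : ZMod (q p)) := by
      push_cast
      rw [hc0, ZMod.natCast_rightInverse _, mul_assoc, ZMod.inv_mul_of_unit _ hu, mul_one]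
    exact (ZMod.natCast_eq_natCast_iff _ _ _).mp this
  have hqdvdb : ∀ p ∈ F, ∀ r ∈ F, p ≠ r → q p ∣ b r := by
    intro p hp r hr hpr
    have hcop : Nat.Coprime (q r) (q p) :=
      ((Nat.coprime_primes (Nat.prime_of_mem_primeFactors hr)
        (Nat.prime_of_mem_primeFactors hp)).mpr (Ne.symm hpr)).pow _ _
    have hmuldvd : q r * q p ∣ n :=
      hcop.mul_dvd_of_dvd_of_dvd (Nat.ordProj_dvd n r) (Nat.ordProj_dvd n p)
    exact Nat.dvd_div_of_mul_dvd hmuldvd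
  set S : ℕ := ∑ p ∈ F, c0 p * b p with hS
  -- S < k
  have hterm : ∀ p ∈ F, c0 p * b p ≤ n - 1 := by
    intro p hp
    have hbpos : 0 < b p := Nat.ordCompl_pos p hn0
    have h1 : c0 p * b p ≤ (q p - 1) * b p :=
      Nat.mul_le_mul_right _ (by have := hc0lt p hp; omega)
    have h2 : (q p - 1) * b p = n - b p := by
      calc (q p - 1) * b p = q p * b p - 1 * b p := Nat.sub_mul _ _ _
        _ = n - b p := by rw [hqb p hp, one_mul]
    omega
  have hcard : F.card ≤ n - 1 := by
    have hsub : F ⊆ Finset.Icc 2 n := by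
      intro p hp
      have h1 := (Nat.prime_of_mem_primeFactors hp).two_le
      have h2 := Nat.le_of_dvd (by omega) (Nat.dvd_of_mem_primeFactors hp)
      exact Finset.mem_Icc.mpr ⟨h1, h2⟩
    calc F.card ≤ (Finset.Icc 2 n).card := Finset.card_le_card hsub
      _ = n - 1 := by rw [Nat.card_Icc]; omega
  have hSlt : S < k := by
    have h1 : S ≤ F.card * (n - 1) := Finset.sum_le_card_nsmul _ _ _ hterm
    have h2 : F.card * (n - 1) ≤ (n - 1) * (n - 1) := Nat.mul_le_mul_right _ hcard
    have h3 : (n - 1) * (n - 1) < n ^ 2 := by nlinarith [Nat.sub_lt (by omega : 0 < n) one_pos]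
    omega
  -- n ∣ k - S
  have hSmod : ∀ p ∈ F, S ≡ k [MOD q p] := by
    intro p hp
    have hT : q p ∣ ∑ r ∈ F.erase p, c0 r * b r := by
      refine Finset.dvd_sum fun r hr => ?_
      exact Dvd.dvd.mul_left (hqdvdb p hp r (Finset.mem_of_mem_erase hr)
        (Ne.symm (Finset.ne_of_mem_erase hr))) _
    have hsplit : S = c0 p * b p + ∑ r ∈ F.erase p, c0 r * b r :=
      (Finset.add_sum_erase F _ hp).symm
    calc S ≡ c0 p * b p + 0 [MOD q p] := by
            rw [hsplit]
            exact Nat.ModEq.add_left _ ((Nat.modEq_zero_iff_dvd).mpr hT)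
      _ = c0 p * b p := by ring
      _ ≡ k [MOD q p] := hmod p hp
  have hdvd : n ∣ k - S := by
    have hks0 : k - S ≠ 0 := by omega
    rw [← Nat.factorization_le_iff_dvd hn0 hks0]
    rw [Finsupp.le_iff]
    intro p hp
    rw [Nat.support_factorization] at hp
    have hqdvd : q p ∣ k - S := (Nat.modEq_iff_dvd' hSlt.le).mp (hSmod p hp)
    exact (Nat.Prime.pow_dvd_iff_le_factorization
      (Nat.prime_of_mem_primeFactors hp) hks0).mp hqdvd
  obtain ⟨m, hm⟩ := hdvd
  obtain ⟨p₀, hp₀⟩ := Nat.nonempty_primeFactors.mpr (by omega : 1 < n)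
  refine ⟨fun p => c0 p + (if p = p₀ then m * q p₀ else 0), ?_⟩
  have key : ∑ p ∈ F, (c0 p + if p = p₀ then m * q p₀ else 0) * b p
      = S + m * (q p₀ * b p₀) := by
    calc ∑ p ∈ F, (c0 p + if p = p₀ then m * q p₀ else 0) * b p
        = ∑ p ∈ F, (c0 p * b p + if p = p₀ then m * (q p₀ * b p) else 0) := by
          refine Finset.sum_congr rfl fun p hp => ?_
          by_cases h : p = p₀ <;> simp [h, add_mul, mul_assoc]
      _ = S + ∑ p ∈ F, (if p = p₀ then m * (q p₀ * b p) else 0) := by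
          rw [Finset.sum_add_distrib, hS]
      _ = S + m * (q p₀ * b p₀) := by
          rw [Finset.sum_ite_eq' F p₀ (fun p => m * (q p₀ * b p))]
          simp [hp₀, hF]
  rw [key, hqb p₀ hp₀, mul_comm m n]
  omega
end

section
/- Let G be a finite group, let k ≥ 1, and let H be a subgroup of G contained in the center Z(G) of G. If both H and the quotient group G/H are k-round, then G is k-round. -/
lemma aux_int (t s : ℕ) (ht : 0 < t) (hs : 0 < s) {x y m : ℤ}
    (hx0 : 0 ≤ x) (hx : x < t * s) (hy0 : 0 ≤ y) (hy : y < t * s)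
    (hcong : y ≡ x + m [ZMOD (t * s : ℕ)]) :
    y % t = (x % t + m) % t ∧ y / t ≡ x / t + (x % t + m) / t [ZMOD (s : ℤ)] := by
  have ht' : (0:ℤ) < t := by exact_mod_cast ht
  have hs' : (0:ℤ) < s := by exact_mod_cast hs
  set r : ℤ := x % t with hr
  set b : ℤ := x / t with hb
  set c : ℤ := (r + m) / t with hc
  set r' : ℤ := (r + m) % t with hr'
  have hxd : x = t * b + r := (Int.mul_ediv_add_emod x t).symm
  have hcd : r + m = t * c + r' := (Int.mul_ediv_add_emod (r+m) t).symm
  have hr'0 : 0 ≤ r' := Int.emod_nonneg _ (ne_of_gt ht')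
  have hr't : r' < t := Int.emod_lt_of_pos _ ht'
  set A : ℤ := (b + c) % s with hA
  have hA0 : 0 ≤ A := Int.emod_nonneg _ (ne_of_gt hs')
  have hAs : A < s := Int.emod_lt_of_pos _ hs'
  have hmod : b + c ≡ A [ZMOD (s:ℤ)] := (Int.emod_emod_of_dvd _ dvd_rfl).symm
  have key : y = t * A + r' := by
    have h1 : t * (b + c) + r' ≡ t * A + r' [ZMOD ((t:ℤ) * s)] :=
      (hmod.mul_left' (c := t)).add_right r'
    have h2 : y ≡ t * A + r' [ZMOD ((t:ℤ) * s)] := by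
      have : y ≡ t * (b + c) + r' [ZMOD ((t:ℤ)*s)] := by
        have : x + m = t * (b + c) + r' := by rw [mul_add]; omega
        simpa [this] using (by exact_mod_cast hcong : y ≡ x + m [ZMOD ((t:ℤ)*s)])
      exact this.trans h1
    have hd : ((t:ℤ) * s) ∣ (t * A + r' - y) := h2.dvd
    have habs : |t * A + r' - y| < (t:ℤ) * s := by
      have h3 : t * A + r' < t * s := by nlinarith
      have h4 : 0 ≤ t * A + r' := by positivity
      rw [abs_lt]; constructor <;> nlinarith
    have := Int.eq_zero_of_abs_lt_dvd hd habs
    omega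
  constructor
  · have : y % t = r' % t := by rw [key, add_comm, Int.add_mul_emod_self_left]
    rw [this, Int.emod_eq_of_lt hr'0 hr't]
  · have h5 : y / t = A := by
      rw [key, add_comm, Int.add_mul_ediv_left _ _ (ne_of_gt ht'),
        Int.ediv_eq_zero_of_lt hr'0 hr't, zero_add]
    rw [h5]
    exact hmod.symm

lemma aux_shift (n t s : ℕ) (hn : n = t * s) (ht : 0 < t) (hs : 0 < s)
    (i : ZMod n) (m : ℤ) :
    (((i + (m : ZMod n)).val : ℕ) : ZMod t) = ((i.val : ℕ) : ZMod t) + (m : ZMod t) ∧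
    (((i + (m : ZMod n)).val / t : ℕ) : ZMod s)
      = ((i.val / t : ℕ) : ZMod s) + ((((i.val : ℤ) % t + m) / t : ℤ) : ZMod s) := by
  subst hn
  haveI : NeZero (t * s) := ⟨by positivity⟩
  have hcong : ((i + (m : ZMod (t*s))).val : ℤ) ≡ (i.val : ℤ) + m [ZMOD ((t*s : ℕ) : ℤ)] := by
    rw [← ZMod.intCast_eq_intCast_iff]
    push_cast [ZMod.natCast_val, ZMod.cast_id]
    rfl
  have hx0 : (0:ℤ) ≤ (i.val : ℤ) := Int.natCast_nonneg _
  have hxlt : ((i.val : ℤ)) < (t:ℤ) * s := by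
    have := ZMod.val_lt i; exact_mod_cast this
  have hy0 : (0:ℤ) ≤ ((i + (m : ZMod (t*s))).val : ℤ) := Int.natCast_nonneg _
  have hylt : ((i + (m : ZMod (t*s))).val : ℤ) < (t:ℤ) * s := by
    have := ZMod.val_lt (i + (m : ZMod (t*s))); exact_mod_cast this
  obtain ⟨h1, h2⟩ := aux_int t s ht hs hx0 hxlt hy0 hylt (by exact_mod_cast hcong)
  constructor
  · have hmt : ((i + (m : ZMod (t*s))).val : ℤ) ≡ (i.val : ℤ) + m [ZMOD ((t:ℕ) : ℤ)] := by
      have hxx : (i.val : ℤ) % t ≡ (i.val : ℤ) [ZMOD (t:ℤ)] := Int.emod_emod_of_dvd _ dvd_rfl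
      calc ((i + (m : ZMod (t*s))).val : ℤ)
          ≡ ((i + (m : ZMod (t*s))).val : ℤ) % t [ZMOD (t:ℤ)] :=
            (Int.emod_emod_of_dvd _ dvd_rfl).symm
        _ = ((i.val : ℤ) % t + m) % t := h1
        _ ≡ (i.val : ℤ) % t + m [ZMOD (t:ℤ)] := Int.emod_emod_of_dvd _ dvd_rfl
        _ ≡ (i.val : ℤ) + m [ZMOD (t:ℤ)] := hxx.add_right m
    have := (ZMod.intCast_eq_intCast_iff _ _ t).mpr hmt
    push_cast at this
    exact this
  · have e1 : (((i + (m : ZMod (t*s))).val / t : ℕ) : ℤ) = ((i + (m : ZMod (t*s))).val : ℤ) / t :=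
      Int.natCast_ediv _ _
    have e2 : ((i.val / t : ℕ) : ℤ) = (i.val : ℤ) / t := Int.natCast_ediv _ _
    have h3 : ((((i + (m : ZMod (t*s))).val : ℤ) / t : ℤ) : ZMod s)
        = (((i.val : ℤ) / t + ((i.val : ℤ) % t + m) / t : ℤ) : ZMod s) :=
      (ZMod.intCast_eq_intCast_iff _ _ s).mpr h2
    rw [← e1, ← e2, Int.cast_add] at h3
    simp only [Int.cast_natCast] at h3
    exact h3

lemma aux_combine (n t s : ℕ) (hn : n = t * s) (ht : 0 < t) (hs : 0 < s)
    (i i' : ZMod n)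
    (h1 : ((i.val : ℕ) : ZMod t) = ((i'.val : ℕ) : ZMod t))
    (h2 : ((i.val / t : ℕ) : ZMod s) = ((i'.val / t : ℕ) : ZMod s)) : i = i' := by
  subst hn
  haveI : NeZero (t * s) := ⟨by positivity⟩
  have hv1 : i.val % t = i'.val % t := by
    have h := congrArg ZMod.val h1
    simp only [ZMod.val_natCast] at h
    exact h
  have hd1 : i.val / t < s := Nat.div_lt_of_lt_mul (ZMod.val_lt i)
  have hd2 : i'.val / t < s := Nat.div_lt_of_lt_mul (ZMod.val_lt i')
  have hv2 : i.val / t = i'.val / t := by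
    have h := congrArg ZMod.val h2
    simp only [ZMod.val_natCast, Nat.mod_eq_of_lt hd1, Nat.mod_eq_of_lt hd2] at h
    exact h
  have hval : i.val = i'.val := by
    have e1 := Nat.div_add_mod i.val t
    have e2 := Nat.div_add_mod i'.val t
    rw [← e1, ← e2, hv1, hv2]
  exact ZMod.val_injective _ hval

lemma aux_split {G : Type*} [Group G] : ∀ {k : ℕ} (a b : Fin k → G),
    (∀ j, b j ∈ Subgroup.center G) →
    (List.ofFn fun j => a j * b j).prod = (List.ofFn a).prod * (List.ofFn b).prod := by
  intro k
  induction k with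
  | zero => intro a b _; simp
  | succ k ih =>
    intro a b hb
    rw [List.ofFn_succ, List.ofFn_succ (f := a), List.ofFn_succ (f := b)]
    simp only [List.prod_cons]
    rw [ih (fun j => a j.succ) (fun j => b j.succ) (fun j => hb j.succ)]
    have hc : ∀ x : G, b 0 * x = x * b 0 := fun x =>
      (Subgroup.mem_center_iff.mp (hb 0) x).symm
    rw [mul_assoc, mul_assoc, ← mul_assoc (b 0), hc ((List.ofFn fun j => a j.succ).prod)]
    group

/-- If `H` is a subgroup of a finite group `G` contained in the center of `G`,
and both `H` and `G/H` are `k`-round, then `G` is `k`-round. -/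
theorem statement8 (G : Type*) [Group G] [Finite G] (k : ℕ) (hk : 1 ≤ k)
    (H : Subgroup G) (hH : H ≤ Subgroup.center G) :
    haveI : H.Normal :=
      ⟨fun a ha g => by
        rw [(Subgroup.mem_center_iff.mp (hH ha)) g]
        simpa using ha⟩
    IsKRound H k → IsKRound (G ⧸ H) k → IsKRound G k := by
  haveI hN : H.Normal :=
    ⟨fun a ha g => by
      rw [(Subgroup.mem_center_iff.mp (hH ha)) g]
      simpa using ha⟩
  intro hRH hRQ
  obtain ⟨h, hh⟩ := hRH
  obtain ⟨q, hq⟩ := hRQ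
  have hn : Nat.card G = Nat.card (G ⧸ H) * Nat.card H :=
    Subgroup.card_eq_card_quotient_mul_card_subgroup H
  have ht : 0 < Nat.card (G ⧸ H) := Nat.card_pos
  have hs : 0 < Nat.card H := Nat.card_pos
  refine ⟨fun i =>
    (q ((i.val : ZMod (Nat.card (G ⧸ H))))).out *
      ((h (((i.val / Nat.card (G ⧸ H) : ℕ) : ZMod (Nat.card H))) : H) : G), ?_⟩
  intro m
  rw [Nat.bijective_iff_injective_and_card]
  refine ⟨?_, by simp [Nat.card_zmod]⟩
  have hshift := fun (i : ZMod (Nat.card G)) (mm : ℤ) =>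
    aux_shift _ _ _ hn ht hs i mm
  -- carry function
  set c : ZMod (Nat.card G) → ℤ → ℤ :=
    fun i mm => (((i.val : ℤ) % (Nat.card (G ⧸ H) : ℤ)) + mm) / (Nat.card (G ⧸ H) : ℤ)
    with hc
  have hexp : ∀ i : ZMod (Nat.card G),
      (List.ofFn fun j => (q (((i + (m j : ZMod (Nat.card G))).val :
            ZMod (Nat.card (G ⧸ H))))).out *
          ((h ((((i + (m j : ZMod (Nat.card G))).val / Nat.card (G ⧸ H) : ℕ) :
            ZMod (Nat.card H))) : H) : G)).prod
      = (List.ofFn fun j =>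
            (q ((i.val : ZMod (Nat.card (G ⧸ H))) + (m j : ZMod (Nat.card (G ⧸ H))))).out).prod *
        (List.ofFn fun j =>
            ((h (((i.val / Nat.card (G ⧸ H) : ℕ) : ZMod (Nat.card H)) +
              ((c i (m j) : ℤ) : ZMod (Nat.card H))) : H) : G)).prod := by
    intro i
    have e : (fun j : Fin k => (q (((i + (m j : ZMod (Nat.card G))).val :
            ZMod (Nat.card (G ⧸ H))))).out *
          ((h ((((i + (m j : ZMod (Nat.card G))).val / Nat.card (G ⧸ H) : ℕ) :
            ZMod (Nat.card H))) : H) : G))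
        = fun j : Fin k =>
          (q ((i.val : ZMod (Nat.card (G ⧸ H))) + (m j : ZMod (Nat.card (G ⧸ H))))).out *
          ((h (((i.val / Nat.card (G ⧸ H) : ℕ) : ZMod (Nat.card H)) +
              ((c i (m j) : ℤ) : ZMod (Nat.card H))) : H) : G) := by
      funext j
      rw [(hshift i (m j)).1, (hshift i (m j)).2]
    rw [e]
    exact aux_split _ _ (fun j => hH (SetLike.coe_mem _))
  intro i i' hEq
  simp only [hexp i, hexp i'] at hEq
  -- project to the quotient to identify the ZMod (card (G/H)) components
  have hπ : (i.val : ZMod (Nat.card (G ⧸ H))) = (i'.val : ZMod (Nat.card (G ⧸ H))) := by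
    apply (hq m).injective
    have h2 := congrArg (QuotientGroup.mk' H) hEq
    have hone : ∀ x : ZMod (Nat.card H), ((h x : G) : G ⧸ H) = 1 :=
      fun x => (QuotientGroup.eq_one_iff _).mpr (SetLike.coe_mem _)
    simp only [map_mul, map_list_prod, List.map_ofFn, Function.comp_def,
      QuotientGroup.mk'_apply, QuotientGroup.out_eq', hone,
      QuotientGroup.eq_one_iff, SetLike.coe_mem, List.ofFn_const, List.prod_replicate,
      one_pow, mul_one] at h2
    simpa using h2
  -- the carries agree
  have hvmod : i.val % Nat.card (G ⧸ H) = i'.val % Nat.card (G ⧸ H) := by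
    have := congrArg ZMod.val hπ
    simpa only [ZMod.val_natCast] using this
  have hcc : ∀ mm : ℤ, c i mm = c i' mm := by
    intro mm
    rw [hc]
    simp only
    rw [show ((i.val : ℤ) % (Nat.card (G ⧸ H) : ℤ)) = ((i'.val : ℤ) % (Nat.card (G ⧸ H) : ℤ)) by
      rw [← Int.natCast_emod, ← Int.natCast_emod, hvmod]]
  simp only [hπ, hcc] at hEq
  have hEq2 := mul_left_cancel hEq
  -- move to H
  have hHprod : (List.ofFn fun j =>
        (h (((i.val / Nat.card (G ⧸ H) : ℕ) : ZMod (Nat.card H)) +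
          ((c i' (m j) : ℤ) : ZMod (Nat.card H))))).prod
      = (List.ofFn fun j =>
        (h (((i'.val / Nat.card (G ⧸ H) : ℕ) : ZMod (Nat.card H)) +
          ((c i' (m j) : ℤ) : ZMod (Nat.card H))))).prod := by
    apply Subtype.coe_injective
    show (H.subtype _ : G) = H.subtype _
    rw [map_list_prod, map_list_prod, List.map_ofFn, List.map_ofFn]
    simpa [Function.comp_def] using hEq2
  have hβ : ((i.val / Nat.card (G ⧸ H) : ℕ) : ZMod (Nat.card H))
      = ((i'.val / Nat.card (G ⧸ H) : ℕ) : ZMod (Nat.card H)) :=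
    (hh (fun j => c i' (m j))).injective hHprod
  exact aux_combine _ _ _ hn ht hs i i' hπ hβ
end

section
/- Let G₁ and G₂ be finite groups and k ≥ 1 an integer. If G₁ and G₂ are both k-round, then the direct product G₁ × G₂ is k-round. -/
private lemma keyArith (n₁ n₂ : ℕ) (hn₁ : 0 < n₁) (v r q : ℕ) (m t : ℤ)
    (hv : (v : ℤ) = r + n₁ * q + m + (n₁ * n₂) * t) :
    ((v % n₁ : ℕ) : ZMod n₁) = (((r : ℤ) + m : ℤ) : ZMod n₁) ∧
    ((v / n₁ : ℕ) : ZMod n₂) = (((q : ℤ) + ((r : ℤ) + m) / n₁ : ℤ) : ZMod n₂) := by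
  have hn₁' : (0 : ℤ) < (n₁ : ℤ) := by exact_mod_cast hn₁
  set c : ℤ := ((r : ℤ) + m) / n₁ with hc
  set r' : ℤ := ((r : ℤ) + m) % n₁ with hr'
  have hrm : (n₁ : ℤ) * c + r' = (r : ℤ) + m := Int.mul_ediv_add_emod _ _
  have h0r' : 0 ≤ r' := Int.emod_nonneg _ (by positivity)
  have hr'lt : r' < (n₁ : ℤ) := Int.emod_lt_of_pos _ hn₁'
  have hv' : (v : ℤ) = r' + (n₁ : ℤ) * (c + q + n₂ * t) := by linear_combination hv - hrm
  constructor
  · have h1 : ((v % n₁ : ℕ) : ℤ) = (v : ℤ) % (n₁ : ℤ) := Int.natCast_mod _ _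
    have h2 : (v : ℤ) % (n₁ : ℤ) = r' := by
      rw [hv', Int.add_mul_emod_self_left, Int.emod_eq_of_lt h0r' hr'lt]
    have h3 : r' = ((r : ℤ) + m) - n₁ * c := by linear_combination hrm
    calc ((v % n₁ : ℕ) : ZMod n₁) = ((((v % n₁ : ℕ) : ℤ)) : ZMod n₁) := (Int.cast_natCast _).symm
      _ = ((r' : ℤ) : ZMod n₁) := by rw [h1, h2]
      _ = (((r : ℤ) + m : ℤ) : ZMod n₁) := by rw [h3]; push_cast; simp [ZMod.natCast_self]
  · have h1 : ((v / n₁ : ℕ) : ℤ) = (v : ℤ) / (n₁ : ℤ) := Int.natCast_div _ _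
    have h2 : (v : ℤ) / (n₁ : ℤ) = c + q + n₂ * t := by
      rw [hv', Int.add_mul_ediv_left _ _ (ne_of_gt hn₁'),
        Int.ediv_eq_zero_of_lt h0r' hr'lt, zero_add]
    calc ((v / n₁ : ℕ) : ZMod n₂) = ((((v / n₁ : ℕ) : ℤ)) : ZMod n₂) := (Int.cast_natCast _).symm
      _ = ((c + q + n₂ * t : ℤ) : ZMod n₂) := by rw [h1, h2]
      _ = (((q : ℤ) + c : ℤ) : ZMod n₂) := by push_cast; simp [ZMod.natCast_self]; ring

private lemma auxRound {G₁ G₂ : Type*} [Group G₁] [Group G₂] [Finite G₁] [Finite G₂]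
    (k n₁ n₂ N : ℕ) (hn₁ : 0 < n₁) (hn₂ : 0 < n₂) (hN : N = n₁ * n₂)
    (hcard₁ : Nat.card G₁ = n₁) (hcard₂ : Nat.card G₂ = n₂)
    (g₁ : ZMod n₁ → G₁) (g₂ : ZMod n₂ → G₂)
    (hg₁ : ∀ m : Fin k → ℤ, Function.Bijective fun i : ZMod n₁ =>
      (List.ofFn fun j : Fin k => g₁ (i + ((m j : ℤ) : ZMod n₁))).prod)
    (hg₂ : ∀ m : Fin k → ℤ, Function.Bijective fun i : ZMod n₂ =>
      (List.ofFn fun j : Fin k => g₂ (i + ((m j : ℤ) : ZMod n₂))).prod)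
    (m : Fin k → ℤ) :
    Function.Bijective fun i : ZMod N =>
      (List.ofFn fun j : Fin k =>
        ((g₁ ((((i + ((m j : ℤ) : ZMod N)).val % n₁ : ℕ)) : ZMod n₁),
          g₂ ((((i + ((m j : ℤ) : ZMod N)).val / n₁ : ℕ)) : ZMod n₂)) : G₁ × G₂)).prod := by
  haveI : NeZero n₁ := ⟨hn₁.ne'⟩
  haveI : NeZero n₂ := ⟨hn₂.ne'⟩
  haveI : NeZero N := ⟨by rw [hN]; positivity⟩
  set e : ZMod n₁ × ZMod n₂ → ZMod N := fun p => ((p.1.val + n₁ * p.2.val : ℕ) : ZMod N)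
    with he_def
  have he_lt : ∀ p : ZMod n₁ × ZMod n₂, p.1.val + n₁ * p.2.val < N := by
    intro p
    have h1 : p.1.val < n₁ := ZMod.val_lt _
    have h2 : p.2.val < n₂ := ZMod.val_lt _
    have h3 : p.1.val + n₁ * p.2.val < n₁ * (p.2.val + 1) := by nlinarith
    calc p.1.val + n₁ * p.2.val < n₁ * (p.2.val + 1) := h3
      _ ≤ n₁ * n₂ := Nat.mul_le_mul_left _ (by omega)
      _ = N := hN.symm
  have he_val : ∀ p : ZMod n₁ × ZMod n₂, (e p).val = p.1.val + n₁ * p.2.val := by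
    intro p; exact ZMod.val_cast_of_lt (he_lt p)
  have he : Function.Bijective e := by
    rw [Nat.bijective_iff_injective_and_card]
    constructor
    · intro p p' h
      have h' : p.1.val + n₁ * p.2.val = p'.1.val + n₁ * p'.2.val := by
        rw [← he_val p, ← he_val p', h]
      have h1 : p.1.val = p'.1.val := by
        have e1 : (p.1.val + n₁ * p.2.val) % n₁ = p.1.val := by
          rw [Nat.add_mul_mod_self_left, Nat.mod_eq_of_lt (ZMod.val_lt _)]
        have e2 : (p'.1.val + n₁ * p'.2.val) % n₁ = p'.1.val := by
          rw [Nat.add_mul_mod_self_left, Nat.mod_eq_of_lt (ZMod.val_lt _)]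
        rw [← e1, ← e2, h']
      have h2 : p.2.val = p'.2.val := by
        have e1 : (p.1.val + n₁ * p.2.val) / n₁ = p.2.val := by
          rw [Nat.add_mul_div_left _ _ hn₁, Nat.div_eq_of_lt (ZMod.val_lt _), zero_add]
        have e2 : (p'.1.val + n₁ * p'.2.val) / n₁ = p'.2.val := by
          rw [Nat.add_mul_div_left _ _ hn₁, Nat.div_eq_of_lt (ZMod.val_lt _), zero_add]
        rw [← e1, ← e2, h']
      exact Prod.ext (ZMod.val_injective _ h1) (ZMod.val_injective _ h2)
    · simp [Nat.card_zmod, hN]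
  rw [← Function.Bijective.of_comp_iff _ he]
  have hcomp : ∀ (p : ZMod n₁ × ZMod n₂) (j : Fin k),
      ((g₁ ((((e p + ((m j : ℤ) : ZMod N)).val % n₁ : ℕ)) : ZMod n₁),
        g₂ ((((e p + ((m j : ℤ) : ZMod N)).val / n₁ : ℕ)) : ZMod n₂)) : G₁ × G₂) =
        (g₁ (p.1 + ((m j : ℤ) : ZMod n₁)),
         g₂ (p.2 + ((((p.1.val : ℤ) + m j) / (n₁ : ℤ) : ℤ) : ZMod n₂))) := by
    intro p j
    set v : ℕ := (e p + ((m j : ℤ) : ZMod N)).val with hv_def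
    have h1 : ((v : ℕ) : ZMod N) = e p + ((m j : ℤ) : ZMod N) := by
      rw [hv_def, ZMod.natCast_val, ZMod.cast_id]
    have h2 : ((v : ℤ) : ZMod N) = (((p.1.val + n₁ * p.2.val : ℤ) + m j : ℤ) : ZMod N) := by
      push_cast
      rw [h1, he_def]
      push_cast
      ring
    rw [ZMod.intCast_eq_intCast_iff] at h2
    obtain ⟨t, ht⟩ := h2.dvd
    have hNZ : ((N : ℕ) : ℤ) = (n₁ : ℤ) * (n₂ : ℤ) := by exact_mod_cast congrArg Nat.cast hN
    rw [hNZ] at ht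
    have hv : (v : ℤ) = p.1.val + n₁ * p.2.val + m j + ((n₁ * n₂ : ℕ) : ℤ) * (-t) := by
      push_cast
      linear_combination -ht
    obtain ⟨hfst, hsnd⟩ := keyArith n₁ n₂ hn₁ v p.1.val p.2.val (m j) (-t) hv
    have hp1 : ((p.1.val : ℕ) : ZMod n₁) = p.1 := by rw [ZMod.natCast_val, ZMod.cast_id]
    have hp2 : ((p.2.val : ℕ) : ZMod n₂) = p.2 := by rw [ZMod.natCast_val, ZMod.cast_id]
    refine Prod.ext ?_ ?_
    · show g₁ _ = g₁ _
      congr 1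
      rw [hfst]
      push_cast
      rw [hp1]
    · show g₂ _ = g₂ _
      congr 1
      rw [hsnd]
      push_cast
      rw [hp2]
  have heq : ((fun i : ZMod N =>
      (List.ofFn fun j : Fin k =>
        ((g₁ ((((i + ((m j : ℤ) : ZMod N)).val % n₁ : ℕ)) : ZMod n₁),
          g₂ ((((i + ((m j : ℤ) : ZMod N)).val / n₁ : ℕ)) : ZMod n₂)) : G₁ × G₂)).prod) ∘ e) =
      fun p : ZMod n₁ × ZMod n₂ =>
        ((List.ofFn fun j : Fin k => g₁ (p.1 + ((m j : ℤ) : ZMod n₁))).prod,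
         (List.ofFn fun j : Fin k =>
            g₂ (p.2 + ((((p.1.val : ℤ) + m j) / (n₁ : ℤ) : ℤ) : ZMod n₂))).prod) := by
    funext p
    simp only [Function.comp_apply]
    rw [show (List.ofFn fun j : Fin k =>
        ((g₁ ((((e p + ((m j : ℤ) : ZMod N)).val % n₁ : ℕ)) : ZMod n₁),
          g₂ ((((e p + ((m j : ℤ) : ZMod N)).val / n₁ : ℕ)) : ZMod n₂)) : G₁ × G₂)) =
        List.ofFn fun j : Fin k =>
          ((g₁ (p.1 + ((m j : ℤ) : ZMod n₁)),
           g₂ (p.2 + ((((p.1.val : ℤ) + m j) / (n₁ : ℤ) : ℤ) : ZMod n₂))) : G₁ × G₂) from by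
      congr 1; funext j; exact hcomp p j]
    refine Prod.ext ?_ ?_
    · have := map_list_prod (MonoidHom.fst G₁ G₂) (List.ofFn fun j : Fin k =>
        ((g₁ (p.1 + ((m j : ℤ) : ZMod n₁)),
          g₂ (p.2 + ((((p.1.val : ℤ) + m j) / (n₁ : ℤ) : ℤ) : ZMod n₂))) : G₁ × G₂))
      simpa [List.map_ofFn, Function.comp_def] using this
    · have := map_list_prod (MonoidHom.snd G₁ G₂) (List.ofFn fun j : Fin k =>
        ((g₁ (p.1 + ((m j : ℤ) : ZMod n₁)),
          g₂ (p.2 + ((((p.1.val : ℤ) + m j) / (n₁ : ℤ) : ℤ) : ZMod n₂))) : G₁ × G₂))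
      simpa [List.map_ofFn, Function.comp_def] using this
  rw [heq]
  rw [Nat.bijective_iff_injective_and_card]
  constructor
  · intro p p' h
    simp only [Prod.mk.injEq] at h
    have hfst : p.1 = p'.1 := (hg₁ m).injective h.1
    have hsnd : p.2 = p'.2 := by
      have h2 := h.2
      rw [hfst] at h2
      exact (hg₂ fun j => ((p'.1.val : ℤ) + m j) / (n₁ : ℤ)).injective h2
    exact Prod.ext hfst hsnd
  · simp [Nat.card_prod, Nat.card_zmod, hcard₁, hcard₂]

/-- If finite groups `G₁` and `G₂` are both `k`-round, then `G₁ × G₂` is `k`-round. -/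
theorem statement9 (G₁ G₂ : Type*) [Group G₁] [Group G₂] [Finite G₁] [Finite G₂]
    (k : ℕ) (hk : 1 ≤ k) (h₁ : IsKRound G₁ k) (h₂ : IsKRound G₂ k) :
    IsKRound (G₁ × G₂) k := by
  obtain ⟨g₁, hg₁⟩ := h₁
  obtain ⟨g₂, hg₂⟩ := h₂
  refine ⟨fun i => (g₁ ((i.val % Nat.card G₁ : ℕ) : ZMod (Nat.card G₁)),
    g₂ ((i.val / Nat.card G₁ : ℕ) : ZMod (Nat.card G₂))), fun m => ?_⟩
  exact auxRound k (Nat.card G₁) (Nat.card G₂) (Nat.card (G₁ × G₂))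
    Nat.card_pos Nat.card_pos (Nat.card_prod _ _) rfl rfl g₁ g₂ hg₁ hg₂ m
end

section
/- Let G be a finite group, k ≥ 1 an integer, and H a normal subgroup of G such that every coset of H in G contains an element that commutes with all elements of H. If both H and the quotient group G/H are k-round, then G is k-round. -/
/-- Cast-compatibility of `x ↦ x / t` with reduction mod `n = t * s`. -/
private lemma key1 (t s n x : ℕ) (ht : 0 < t) (h : n = t*s) :
    ((x % n / t : ℕ) : ZMod s) = ((x / t : ℕ) : ZMod s) := by
  subst h
  conv_rhs => rw [← Nat.mod_add_div x (t*s), mul_assoc, Nat.add_mul_div_left _ _ ht]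
  push_cast
  simp

private lemma key2 (t s x y : ℕ) (ht : 0 < t) :
    (((x+y)/t : ℕ) : ZMod s) = ((x/t : ℕ) : ZMod s) + (((x % t + y)/t : ℕ) : ZMod s) := by
  conv_lhs => rw [← Nat.mod_add_div x t]
  rw [show x % t + t * (x / t) + y = (x % t + y) + t * (x/t) by ring, Nat.add_mul_div_left _ _ ht]
  push_cast; ring

private lemma key3 (t s n x : ℕ) (h : n = t*s) : ((x % n : ℕ) : ZMod t) = (x : ZMod t) := by
  subst h
  conv_rhs => rw [← Nat.mod_add_div x (t*s)]
  push_cast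
  simp

private lemma keyval (s : ℕ) [NeZero s] (x : ZMod s) : (((x.val : ℕ) : ℤ) : ZMod s) = x := by
  rw [Int.cast_natCast, ZMod.natCast_val, ZMod.cast_id]

private theorem split_prod {G : Type*} [Group G] (H : Subgroup G) :
    ∀ (k : ℕ) (X A : Fin k → G), (∀ j, A j ∈ H) → (∀ j, ∀ h ∈ H, X j * h = h * X j) →
    (List.ofFn fun j => X j * A j).prod = (List.ofFn X).prod * (List.ofFn A).prod := by
  intro k
  induction k with
  | zero => intro X A _ _; simp
  | succ k ih =>
    intro X A hA hX
    rw [List.ofFn_succ, List.ofFn_succ, List.ofFn_succ, List.prod_cons, List.prod_cons,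
      List.prod_cons, ih (fun j => X j.succ) (fun j => A j.succ) (fun j => hA j.succ)
        (fun j => hX j.succ)]
    have hc : Commute (A 0) (List.ofFn fun j : Fin k => X j.succ).prod := by
      apply Commute.list_prod_right
      intro y hy
      obtain ⟨j, rfl⟩ := List.mem_ofFn.mp hy
      exact (hX j.succ (A 0) (hA 0)).symm
    rw [mul_assoc (X 0), ← mul_assoc (A 0), hc.eq]
    group


/-- If `H` is a normal subgroup of a finite group `G` such that every coset of `H`
contains an element commuting with all elements of `H`, and both `H` and `G/H` are
`k`-round, then `G` is `k`-round. -/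
theorem statement10 (G : Type*) [Group G] [Finite G] (k : ℕ) (hk : 1 ≤ k)
    (H : Subgroup G) [H.Normal]
    (hcoset : ∀ g : G, ∃ x : G, g⁻¹ * x ∈ H ∧ ∀ h ∈ H, x * h = h * x)
    (h₁ : IsKRound H k) (h₂ : IsKRound (G ⧸ H) k) :
    IsKRound G k := by
  classical
  have hn : Nat.card G = Nat.card (G ⧸ H) * Nat.card ↥H :=
    Subgroup.card_eq_card_quotient_mul_card_subgroup H
  set n := Nat.card G with hndef
  set t := Nat.card (G ⧸ H) with htdef
  set s := Nat.card ↥H with hsdef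
  haveI : NeZero n := ⟨Nat.card_pos.ne'⟩
  haveI : NeZero t := ⟨Nat.card_pos.ne'⟩
  haveI : NeZero s := ⟨Nat.card_pos.ne'⟩
  have ht0 : 0 < t := Nat.card_pos
  obtain ⟨a, ha⟩ := h₁
  obtain ⟨b, hb⟩ := h₂
  choose x hx1 hx2 using hcoset
  set X : (G ⧸ H) → G := fun c => x (Quotient.out c) with hXdef
  have hXmk : ∀ c : G ⧸ H, ((X c : G) : G ⧸ H) = c := by
    intro c
    have h1 : ((Quotient.out c : G) : G ⧸ H) = ((X c : G) : G ⧸ H) :=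
      QuotientGroup.eq.mpr (hx1 (Quotient.out c))
    rw [← h1]
    exact QuotientGroup.out_eq' c
  have hXcomm : ∀ c : G ⧸ H, ∀ h ∈ H, X c * h = h * X c := fun c => hx2 _
  set U : ZMod n → ZMod t := fun i => (i.val : ZMod t) with hUdef
  set W : ZMod n → ZMod s := fun i => ((i.val / t : ℕ) : ZMod s) with hWdef
  have hUadd : ∀ (i μ : ZMod n), U (i + μ) = U i + U μ := by
    intro i μ
    simp only [hUdef]
    rw [ZMod.val_add, key3 t s n _ hn]
    push_cast
    ring
  have hWadd : ∀ (i μ : ZMod n),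
      W (i + μ) = W i + (((i.val % t + μ.val)/t : ℕ) : ZMod s) := by
    intro i μ
    simp only [hWdef]
    rw [ZMod.val_add, key1 t s n _ ht0 hn, key2 _ _ _ _ ht0]
  set g : ZMod n → G := fun i => X (b (U i)) * (a (W i) : G) with hgdef
  refine ⟨g, ?_⟩
  intro m
  rw [Nat.bijective_iff_injective_and_card]
  refine ⟨?_, by simp [Nat.card_zmod, hndef]⟩
  set Cc : ZMod n → Fin k → ZMod s :=
    fun i j => (((i.val % t + ((m j : ZMod n)).val)/t : ℕ) : ZMod s) with hCdef
  have hg : ∀ (i : ZMod n) (j : Fin k),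
      g (i + ((m j : ℤ) : ZMod n)) =
        X (b (U i + U ((m j : ℤ) : ZMod n))) * (a (W i + Cc i j) : G) := by
    intro i j
    simp only [hgdef]
    rw [hUadd, hWadd]
  have hsplit : ∀ i : ZMod n,
      (List.ofFn fun j => g (i + ((m j : ℤ) : ZMod n))).prod =
        (List.ofFn fun j => X (b (U i + U ((m j : ℤ) : ZMod n)))).prod *
          (List.ofFn fun j => (a (W i + Cc i j) : G)).prod := by
    intro i
    rw [show (List.ofFn fun j => g (i + ((m j : ℤ) : ZMod n))) =
        List.ofFn fun j => X (b (U i + U ((m j : ℤ) : ZMod n))) * (a (W i + Cc i j) : G) from by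
      simp only [hg]]
    exact split_prod H k _ _ (fun j => (a _).2) (fun j => hXcomm _)
  have hmk : ∀ i : ZMod n,
      (QuotientGroup.mk' H) ((List.ofFn fun j => g (i + ((m j : ℤ) : ZMod n))).prod) =
        (List.ofFn fun j => b (U i + U ((m j : ℤ) : ZMod n))).prod := by
    intro i
    rw [map_list_prod, List.map_ofFn]
    refine congrArg List.prod (congrArg List.ofFn (funext fun j => ?_))
    simp only [Function.comp_apply, hg, map_mul]
    have h1 : (QuotientGroup.mk' H) (X (b (U i + U ((m j : ℤ) : ZMod n)))) =
        b (U i + U ((m j : ℤ) : ZMod n)) := by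
      rw [QuotientGroup.mk'_apply]; exact hXmk _
    have h2 : (QuotientGroup.mk' H) ((a (W i + Cc i j) : G)) = 1 := by
      rw [QuotientGroup.mk'_apply]
      exact (QuotientGroup.eq_one_iff _).mpr (a _).2
    rw [h1, h2, mul_one]
  intro i i' hP
  dsimp only at hP
  -- Step 1: equality of quotient parts gives U i = U i'
  have hU : U i = U i' := by
    have hq := congrArg (QuotientGroup.mk' H) hP
    rw [hmk i, hmk i'] at hq
    have hcast : ∀ j : Fin k,
        ((((((m j : ZMod n)).val : ℕ) : ℤ)) : ZMod t) = U ((m j : ℤ) : ZMod n) := by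
      intro j
      rw [Int.cast_natCast]
    apply (hb (fun j => ((((m j : ZMod n)).val : ℕ) : ℤ))).injective
    dsimp only
    simp only [hcast]
    exact hq
  have hmodval : i.val % t = i'.val % t := by
    have h := congrArg ZMod.val hU
    simp only [hUdef, ZMod.val_natCast] at h
    exact h
  have hCc : ∀ j, Cc i j = Cc i' j := by
    intro j
    simp only [hCdef, hmodval]
  -- Step 2: cancel the X part
  rw [hsplit i, hsplit i', hU] at hP
  simp only [hCc] at hP
  have hA : (List.ofFn fun j => ((a (W i + Cc i' j) : G))).prod =
      (List.ofFn fun j => ((a (W i' + Cc i' j) : G))).prod := mul_left_cancel hP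
  have e : ∀ (f : Fin k → H), (((List.ofFn f).prod : H) : G) =
      (List.ofFn fun j => ((f j : G))).prod := by
    intro f
    have := map_list_prod H.subtype (List.ofFn f)
    rwa [List.map_ofFn] at this
  have hA' : (List.ofFn fun j => a (W i + Cc i' j)).prod =
      (List.ofFn fun j => a (W i' + Cc i' j)).prod := by
    apply Subtype.coe_injective
    dsimp only
    rw [e, e]
    exact hA
  -- Step 3: injectivity of the H-cycle gives W i = W i'
  have hW : W i = W i' := by
    apply (ha (fun j => (((Cc i' j).val : ℕ) : ℤ))).injective
    dsimp only
    simp only [keyval]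
    exact hA'
  -- Step 4: recover i = i'
  apply ZMod.val_injective n
  have hvlt : i.val < t * s := lt_of_lt_of_eq (ZMod.val_lt i) hn
  have hvlt' : i'.val < t * s := lt_of_lt_of_eq (ZMod.val_lt i') hn
  have hdlt : i.val / t < s := Nat.div_lt_of_lt_mul hvlt
  have hdlt' : i'.val / t < s := Nat.div_lt_of_lt_mul hvlt'
  have hdiv : i.val / t = i'.val / t := by
    have h := congrArg ZMod.val hW
    simp only [hWdef, ZMod.val_natCast] at h
    rwa [Nat.mod_eq_of_lt hdlt, Nat.mod_eq_of_lt hdlt'] at h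
  have h1 := Nat.div_add_mod i.val t
  have h2 := Nat.div_add_mod i'.val t
  rw [hdiv, hmodval] at h1
  omega
end

section
/- Let G be a finite group of order n and for each positive integer l let R_l(G) denote the number of solutions x ∈ G of x^l = 1. If positive integers s, l₁, l₂, …, l_s satisfy R_{l₁}(G)·R_{l₂}(G)⋯R_{l_s}(G) > n^{s−1}, then G is not k-round for any integer k ≥ 1 of the form k = c₁ l₁ + c₂ l₂ + ⋯ + c_s l_s with nonnegative integers c₁, …, c_s. -/
private lemma ofFn_get_prod' {M : Type*} [Monoid M] {α : Type*} (f : α → M) (L : List α)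
    {k : ℕ} (hk : L.length = k) :
    (List.ofFn fun j : Fin k => f (L.get (Fin.cast hk.symm j))).prod = (L.map f).prod := by
  subst hk
  have : (fun j : Fin L.length => f (L.get (Fin.cast rfl j))) = f ∘ L.get := rfl
  rw [this, ← List.map_ofFn, List.ofFn_get]

private lemma prod_flatMap_replicate' {M : Type*} [Monoid M] {s : ℕ}
    (v : Fin s → M) (e : Fin s → ℕ) :
    ((List.finRange s).flatMap fun t => List.replicate (e t) (v t)).prod
      = (List.ofFn fun t => (v t) ^ (e t)).prod := by
  rw [List.flatMap, List.prod_flatten, List.map_map, List.ofFn_eq_map]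
  congr 1
  apply List.map_congr_left
  intro t _
  simp [List.prod_replicate]

/-- Let `G` be a finite group of order `n`, and for `l ≥ 1` let `R_l(G)` be the number
of solutions of `x^l = 1` in `G`. If `R_{l₁}(G) ⋯ R_{l_s}(G) > n^{s-1}` for positive
integers `s, l₁, …, l_s`, then `G` is not `k`-round for any `k ≥ 1` of the form
`k = c₁ l₁ + ⋯ + c_s l_s` with nonnegative integers `c_i`. -/
theorem statement11 (G : Type*) [Group G] [Finite G] (s : ℕ) (hs : 1 ≤ s)
    (l : Fin s → ℕ) (hl : ∀ i, 1 ≤ l i)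
    (h : Nat.card G ^ (s - 1) < ∏ i : Fin s, Nat.card {x : G // x ^ (l i) = 1}) :
    ∀ k : ℕ, 1 ≤ k → (∃ c : Fin s → ℕ, k = ∑ i : Fin s, c i * l i) →
      ¬ IsKRound G k := by
  classical
  rintro k hk ⟨c, hkc⟩ ⟨g, hg⟩
  have hn0 : 0 < Nat.card G := Nat.card_pos
  haveI : NeZero (Nat.card G) := ⟨hn0.ne'⟩
  haveI : Fintype G := Fintype.ofFinite G
  -- g is a bijection
  have h0 : Function.Bijective fun i : ZMod (Nat.card G) => g i ^ k := by
    have := hg fun _ => (0 : ℤ)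
    simpa [List.ofFn_const, List.prod_replicate] using this
  have hgbij : Function.Bijective g := by
    rw [Nat.bijective_iff_injective_and_card]
    refine ⟨fun a b hab => h0.injective ?_, by simp [Nat.card_zmod, Nat.card_eq_fintype_card]⟩
    simp only [hab]
  -- key roundness consequence
  set Ψ : (Fin s → ZMod (Nat.card G)) → ZMod (Nat.card G) → G :=
    fun a i => (List.ofFn fun t : Fin s => g (i + a t) ^ (c t * l t)).prod with hΨ
  have key : ∀ a : Fin s → ZMod (Nat.card G), Function.Bijective (Ψ a) := by
    intro a
    set L : List ℤ :=
      (List.finRange s).flatMap fun t => List.replicate (c t * l t) (((a t).val : ℤ)) with hL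
    have hLlen : L.length = k := by
      rw [hL, List.length_flatMap, hkc, Fin.sum_univ_def]
      apply congrArg List.sum
      apply List.map_congr_left
      intro t _
      simp [Function.comp]
    have hcast : ∀ t, ((((a t).val : ℤ)) : ZMod (Nat.card G)) = a t := by
      intro t
      push_cast
      simp [ZMod.natCast_val]
    have heq : (fun i : ZMod (Nat.card G) =>
        (List.ofFn fun j : Fin k => g (i + ((L.get (Fin.cast hLlen.symm j) : ℤ) : ZMod (Nat.card G)))).prod)
        = Ψ a := by
      funext i
      rw [ofFn_get_prod' (fun z : ℤ => g (i + (z : ZMod (Nat.card G)))) L hLlen]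
      rw [hL, List.map_flatMap]
      simp only [List.map_replicate]
      rw [prod_flatMap_replicate']
      simp only [hΨ, hcast]
    have := hg fun j => L.get (Fin.cast hLlen.symm j)
    rwa [heq] at this
  -- the shift identity
  have hshift : ∀ (a : Fin s → ZMod (Nat.card G)) (i : ZMod (Nat.card G)), Ψ a i = Ψ (fun t => i + a t) 0 := by
    intro a i
    simp only [hΨ, zero_add]
  -- counting sets
  set T : Finset (Fin s → ZMod (Nat.card G)) := Finset.univ.filter fun a => Ψ a 0 = 1 with hT
  set U : Finset ((Fin s → ZMod (Nat.card G)) × ZMod (Nat.card G)) := Finset.univ.filter fun p => Ψ p.1 p.2 = 1 with hU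
  set E : (Fin s → ZMod (Nat.card G)) → ZMod (Nat.card G) :=
    fun a => (Equiv.ofBijective (Ψ a) (key a)).symm 1 with hE
  have hΨE : ∀ a, Ψ a (E a) = 1 := fun a =>
    (Equiv.ofBijective (Ψ a) (key a)).apply_symm_apply 1
  have hU1 : U.card = Nat.card G ^ s := by
    have hcard : U.card = (Finset.univ : Finset (Fin s → ZMod (Nat.card G))).card := by
      refine Finset.card_bij' (fun p _ => p.1) (fun a _ => (a, E a)) ?_ ?_ ?_ ?_
      · intro p hp; exact Finset.mem_univ _
      · intro a _
        simp only [hU, Finset.mem_filter, Finset.mem_univ, true_and]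
        exact hΨE a
      · intro p hp
        simp only [hU, Finset.mem_filter, Finset.mem_univ, true_and] at hp
        have : E p.1 = p.2 := by
          rw [hE]
          rw [Equiv.symm_apply_eq]
          exact hp.symm
        exact Prod.ext rfl this
      · intro a _; rfl
    rw [hcard, Finset.card_univ]
    simp [Fintype.card_fun, ZMod.card]
  have hU2 : U.card = T.card * Nat.card G := by
    have hcard : U.card = (T ×ˢ (Finset.univ : Finset (ZMod (Nat.card G)))).card := by
      refine Finset.card_bij' (fun p _ => (fun t => p.2 + p.1 t, p.2))
        (fun q _ => (fun t => q.1 t - q.2, q.2)) ?_ ?_ ?_ ?_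
      · intro p hp
        simp only [hU, Finset.mem_filter, Finset.mem_univ, true_and] at hp
        simp only [Finset.mem_product, Finset.mem_univ, and_true]
        simp only [hT, Finset.mem_filter, Finset.mem_univ, true_and]
        rw [← hshift]
        exact hp
      · intro q hq
        simp only [Finset.mem_product, Finset.mem_univ, and_true] at hq
        simp only [hT, Finset.mem_filter, Finset.mem_univ, true_and] at hq
        simp only [hU, Finset.mem_filter, Finset.mem_univ, true_and]
        rw [hshift]
        have : (fun t => q.2 + (q.1 t - q.2)) = q.1 := by
          funext t; ring
        rw [this]
        exact hq
      · intro p _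
        refine Prod.ext ?_ rfl
        funext t; simp
      · intro q _
        refine Prod.ext ?_ rfl
        funext t; simp
    rw [hcard, Finset.card_product, Finset.card_univ, ZMod.card]
  have hTcard : T.card = Nat.card G ^ (s - 1) := by
    have hss : s - 1 + 1 = s := Nat.succ_pred_eq_of_pos hs
    have hpow : Nat.card G ^ s = Nat.card G ^ (s - 1) * Nat.card G := by
      rw [← pow_succ, hss]
    have : T.card * Nat.card G = Nat.card G ^ (s - 1) * Nat.card G := by
      rw [← hU2, hU1, hpow]
    exact Nat.eq_of_mul_eq_mul_right hn0 this
  -- lower bound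
  set V : Finset (Fin s → ZMod (Nat.card G)) :=
    Fintype.piFinset fun t => Finset.univ.filter fun j => g j ^ (l t) = 1 with hV
  have hVT : V ⊆ T := by
    intro a ha
    simp only [hV, Fintype.mem_piFinset, Finset.mem_filter, Finset.mem_univ, true_and] at ha
    simp only [hT, Finset.mem_filter, Finset.mem_univ, true_and, hΨ]
    apply List.prod_eq_one
    intro x hx
    rw [List.mem_ofFn] at hx
    obtain ⟨t, ht⟩ := hx
    rw [← ht]
    show g (0 + a t) ^ (c t * l t) = 1
    rw [zero_add, mul_comm, pow_mul, ha t, one_pow]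
  have hVcard : V.card = ∏ t : Fin s, Nat.card {x : G // x ^ (l t) = 1} := by
    rw [hV, Fintype.card_piFinset]
    refine Finset.prod_congr rfl fun t _ => ?_
    rw [← Fintype.card_subtype]
    exact (Fintype.card_congr (Equiv.subtypeEquiv (Equiv.ofBijective g hgbij)
      fun j => by simp)).trans Nat.card_eq_fintype_card.symm
  have hle : (∏ t : Fin s, Nat.card {x : G // x ^ (l t) = 1}) ≤ Nat.card G ^ (s - 1) := by
    rw [← hTcard, ← hVcard]
    exact Finset.card_le_card hVT
  exact absurd h (not_lt.mpr hle)
end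

section
/- Let G be a finite group of order n and set K = (n+1)!. If a cycle g of length n over G is k-round for every integer k with 1 ≤ k ≤ K and gcd(k,n) = 1, then g is totally round. -/
private lemma prod_ofFn_add' {M : Type*} [Monoid M] (f : ℕ → M) (a b : ℕ) :
    (List.ofFn fun j : Fin (a + b) => f j).prod
      = (List.ofFn fun j : Fin a => f j).prod * (List.ofFn fun j : Fin b => f (a + j)).prod := by
  rw [List.ofFn_add, List.prod_append]
  rfl



/-- Let `G` be a finite group of order `n` and set `K = (n+1)!`. If a cycle `g` of
length `n` over `G` is `k`-round for every `1 ≤ k ≤ K` with `gcd(k, n) = 1`, then `g`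
is totally round. -/
theorem statement12 (G : Type*) [Group G] [Finite G] (g : ZMod (Nat.card G) → G)
    (h : ∀ k : ℕ, 1 ≤ k → k ≤ (Nat.card G + 1).factorial →
      Nat.gcd k (Nat.card G) = 1 → IsRoundCycle G k g) :
    IsTotallyRoundCycle G g := by
  classical
  have hn0 : 0 < Nat.card G := Nat.card_pos
  haveI : NeZero (Nat.card G) := ⟨hn0.ne'⟩
  haveI : Fintype G := Fintype.ofFinite G
  intro k
  induction k using Nat.strong_induction_on with
  | _ k ih =>
    intro hk1 hkc
    by_cases hK : k ≤ (Nat.card G + 1).factorial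
    · exact h k hk1 hK hkc
    push_neg at hK
    intro m
    set μ : ℕ → ℤ := fun j => if hj : j < k then m ⟨j, hj⟩ else 0 with hμdef
    set P : ℕ → ZMod (Nat.card G) → G :=
      fun s i => (List.ofFn fun j : Fin s => g (i + (μ j : ZMod (Nat.card G)))).prod with hPdef
    have hround : ∀ s : ℕ, 1 ≤ s → s < k → Nat.gcd s (Nat.card G) = 1 →
        Function.Bijective (P s) := by
      intro s h1 h2 h3
      exact ih s h2 h1 h3 (fun j : Fin s => μ j)
    have hfac : 0 < (Nat.card G).factorial := Nat.factorial_pos _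
    have hfs : (Nat.card G + 1).factorial
        = Nat.card G * (Nat.card G).factorial + (Nat.card G).factorial := by
      rw [Nat.factorial_succ]; ring
    have hlt : ∀ j : ℕ, j ≤ (Nat.card G).factorial → 1 + j * Nat.card G < k := by
      intro j hj
      have h1 : j * Nat.card G ≤ (Nat.card G).factorial * Nat.card G :=
        Nat.mul_le_mul_right _ hj
      have h2 : (Nat.card G).factorial * Nat.card G
          = Nat.card G * (Nat.card G).factorial := Nat.mul_comm _ _
      omega
    have hcop : ∀ j : ℕ, Nat.gcd (1 + j * Nat.card G) (Nat.card G) = 1 := by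
      intro j
      rw [Nat.gcd_add_mul_right_left (Nat.card G) 1 j, Nat.gcd_one_left]
    -- pigeonhole
    have e0 : ZMod (Nat.card G) ≃ G :=
      Fintype.equivOfCardEq (by rw [ZMod.card, Nat.card_eq_fintype_card])
    set ψ : Fin ((Nat.card G).factorial + 1) → (ZMod (Nat.card G) ≃ G) :=
      fun j => Equiv.ofBijective (P (1 + (j : ℕ) * Nat.card G))
        (hround _ (Nat.le_add_right 1 _) (hlt _ (Nat.lt_succ_iff.mp j.isLt)) (hcop _)) with hψdef
    have hcards : Fintype.card (ZMod (Nat.card G) ≃ G)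
        < Fintype.card (Fin ((Nat.card G).factorial + 1)) := by
      rw [Fintype.card_fin, Fintype.card_equiv e0, ZMod.card]
      exact Nat.lt_succ_self _
    obtain ⟨x, y, hxy, hyb, hPeq⟩ :
        ∃ x y : ℕ, x < y ∧ y ≤ (Nat.card G).factorial
          ∧ P (1 + x * Nat.card G) = P (1 + y * Nat.card G) := by
      obtain ⟨a, b, hab, hψeq⟩ := Fintype.exists_ne_map_eq_of_card_lt ψ hcards
      have hfun : P (1 + (a : ℕ) * Nat.card G) = P (1 + (b : ℕ) * Nat.card G) :=
        congrArg (fun e : ZMod (Nat.card G) ≃ G => (e : ZMod (Nat.card G) → G)) hψeq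
      rcases lt_or_gt_of_ne (fun hv => hab (Fin.ext hv) : (a : ℕ) ≠ (b : ℕ)) with hl | hl
      · exact ⟨a, b, hl, Nat.lt_succ_iff.mp b.isLt, hfun⟩
      · exact ⟨b, a, hl, Nat.lt_succ_iff.mp a.isLt, hfun.symm⟩
    -- arithmetic setup
    obtain ⟨tx, htx⟩ : ∃ t, t = 1 + x * Nat.card G := ⟨_, rfl⟩
    obtain ⟨d, hd⟩ : ∃ t, t = y * Nat.card G - x * Nat.card G := ⟨_, rfl⟩
    obtain ⟨r, hr⟩ : ∃ t, t = k - (1 + y * Nat.card G) := ⟨_, rfl⟩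
    have hsub : (y - x) * Nat.card G = y * Nat.card G - x * Nat.card G := Nat.sub_mul _ _ _
    have hmlt : x * Nat.card G < y * Nat.card G := Nat.mul_lt_mul_of_pos_right hxy hn0
    have hky : 1 + y * Nat.card G < k := hlt y hyb
    have hty : 1 + y * Nat.card G = tx + d := by omega
    have hk : k = tx + (d + r) := by omega
    have hk'lt : tx + r < k := by omega
    have hk'1 : 1 ≤ tx + r := by omega
    have hk'cop : Nat.gcd (tx + r) (Nat.card G) = 1 := by
      have hkeq : k = (tx + r) + (y - x) * Nat.card G := by rw [hsub]; omega
      rw [hkeq, Nat.gcd_add_mul_right_left] at hkc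
      exact hkc
    have hμm : ∀ j : Fin k, μ (j : ℕ) = m j := by
      intro j
      simp only [hμdef, j.isLt, dif_pos, Fin.eta]
    -- the new shift sequence
    set ν : ℕ → ℤ := fun s => if s < tx then μ s else μ (d + s) with hνdef
    have hbij := ih (tx + r) hk'lt hk'1 hk'cop (fun j : Fin (tx + r) => ν (j : ℕ))
    -- middle block is identically 1
    have hmid : ∀ i : ZMod (Nat.card G),
        (List.ofFn fun j : Fin d =>
          g (i + (μ (tx + (j : ℕ)) : ZMod (Nat.card G)))).prod = 1 := by
      intro i
      have h1 : P (tx + d) i = P tx i * (List.ofFn fun j : Fin d =>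
          g (i + (μ (tx + (j : ℕ)) : ZMod (Nat.card G)))).prod := by
        simp only [hPdef]
        exact prod_ofFn_add' (fun s => g (i + (μ s : ZMod (Nat.card G)))) tx d
      have h2 : P (tx + d) i = P tx i := by
        rw [← hty, ← hPeq, ← htx]
      exact mul_eq_left.mp (h1.symm.trans h2)
    have hfeq : (fun i : ZMod (Nat.card G) =>
          (List.ofFn fun j : Fin k => g (i + (m j : ZMod (Nat.card G)))).prod)
        = fun i : ZMod (Nat.card G) =>
          (List.ofFn fun j : Fin (tx + r) =>
            g (i + (ν (j : ℕ) : ZMod (Nat.card G)))).prod := by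
      funext i
      have hν1 : ∀ j : Fin tx, ν (j : ℕ) = μ (j : ℕ) := by
        intro j
        simp only [hνdef]
        rw [if_pos j.isLt]
      have hν2 : ∀ j : Fin r, ν (tx + (j : ℕ)) = μ (tx + (d + (j : ℕ))) := by
        intro j
        simp only [hνdef]
        rw [if_neg (by omega)]
        congr 1
        omega
      calc (List.ofFn fun j : Fin k => g (i + (m j : ZMod (Nat.card G)))).prod
          = P k i := by simp only [hPdef, hμm]
        _ = P (tx + (d + r)) i := by rw [← hk]
        _ = P tx i * (List.ofFn fun j : Fin (d + r) =>
              g (i + (μ (tx + (j : ℕ)) : ZMod (Nat.card G)))).prod := by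
            simp only [hPdef]
            exact prod_ofFn_add' (fun s => g (i + (μ s : ZMod (Nat.card G)))) tx (d + r)
        _ = P tx i * ((List.ofFn fun j : Fin d =>
              g (i + (μ (tx + (j : ℕ)) : ZMod (Nat.card G)))).prod *
              (List.ofFn fun j : Fin r =>
              g (i + (μ (tx + (d + (j : ℕ))) : ZMod (Nat.card G)))).prod) := by
            rw [prod_ofFn_add' (fun s => g (i + (μ (tx + s) : ZMod (Nat.card G)))) d r]
        _ = P tx i * (List.ofFn fun j : Fin r =>
              g (i + (μ (tx + (d + (j : ℕ))) : ZMod (Nat.card G)))).prod := by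
            rw [hmid i, one_mul]
        _ = (List.ofFn fun j : Fin tx =>
              g (i + (ν (j : ℕ) : ZMod (Nat.card G)))).prod *
            (List.ofFn fun j : Fin r =>
              g (i + (ν (tx + (j : ℕ)) : ZMod (Nat.card G)))).prod := by
            simp only [hPdef, hν1, hν2]
        _ = (List.ofFn fun j : Fin (tx + r) =>
              g (i + (ν (j : ℕ) : ZMod (Nat.card G)))).prod :=
            (prod_ofFn_add' (fun s => g (i + (ν s : ZMod (Nat.card G)))) tx r).symm
    rw [hfeq]
    exact hbij
end

section
/- Let p and q be odd primes with p < q, and let G be a non-abelian group of order pq. Then G is 2-round. -/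
/-- Let `p` and `q` be odd primes with `p < q`, and let `G` be a non-abelian group of
order `pq`. Then `G` is `2`-round. -/
theorem statement13 (p q : ℕ) (hp : p.Prime) (hq : q.Prime) (hpodd : Odd p)
    (hqodd : Odd q) (hpq : p < q) (G : Type*) [Group G] [Finite G]
    (hcard : Nat.card G = p * q) (hnonab : ∃ a b : G, a * b ≠ b * a) :
    IsKRound G 2 := by
  classical
  haveI : Fact p.Prime := ⟨hp⟩
  haveI : Fact q.Prime := ⟨hq⟩
  haveI := Fintype.ofFinite G
  have hne : p ≠ q := hpq.ne
  have hp2 : p ≠ 2 := by rintro rfl; exact (by norm_num : ¬ Odd 2) hpodd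
  have hq2 : q ≠ 2 := by rintro rfl; exact (by norm_num : ¬ Odd 2) hqodd
  have hp3 : 3 ≤ p := by have := hp.two_le; omega
  have hq3 : 3 ≤ q := by have := hq.two_le; omega
  haveI : NeZero (Nat.card G) := ⟨by rw [hcard]; positivity⟩
  have hdvdp : p ∣ Nat.card G := hcard ▸ dvd_mul_right p q
  have hdvdq : q ∣ Nat.card G := hcard ▸ dvd_mul_left q p
  -- Cauchy
  obtain ⟨a, ha⟩ := exists_prime_orderOf_dvd_card (G := G) q
    (by rw [← Nat.card_eq_fintype_card]; exact hdvdq)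
  obtain ⟨b, hb⟩ := exists_prime_orderOf_dvd_card (G := G) p
    (by rw [← Nat.card_eq_fintype_card]; exact hdvdp)
  have hbp : b ^ p = 1 := by rw [← hb]; exact pow_orderOf_eq_one b
  -- zpowers a is normal
  have hnormal : (Subgroup.zpowers a).Normal := by
    have hAcard : Nat.card (Subgroup.zpowers a) = q := by rw [Nat.card_zpowers, ha]
    have hfact : (Nat.card G).factorization q = 1 := by
      rw [hcard, Nat.factorization_mul hp.pos.ne' hq.pos.ne', hp.factorization,
        hq.factorization]
      simp [Finsupp.single_apply, hne]
    have hcardP : Nat.card (Subgroup.zpowers a) = q ^ (Nat.card G).factorization q := by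
      rw [hfact, pow_one, hAcard]
    let P : Sylow q G := Sylow.ofCard (Subgroup.zpowers a) hcardP
    have hPind : (P : Subgroup G).index = p := by
      have h1 := Subgroup.card_mul_index (P : Subgroup G)
      have h2 : Nat.card (P : Subgroup G) = q := by
        rw [Sylow.coe_ofCard]; exact hAcard
      rw [h2, hcard] at h1
      exact Nat.eq_of_mul_eq_mul_left hq.pos (by rw [h1]; ring)
    have hdvd : Nat.card (Sylow q G) ∣ p := by
      have := Sylow.card_dvd_index P
      rwa [hPind] at this
    have hone : Nat.card (Sylow q G) = 1 := by
      rcases hp.eq_one_or_self_of_dvd _ hdvd with h | h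
      · exact h
      · exfalso
        have hmod := card_sylow_modEq_one q G
        rw [h] at hmod
        have h2 := (Nat.modEq_iff_dvd' hp.one_lt.le).mp hmod.symm
        have := Nat.le_of_dvd (by have := hp.one_lt; omega) h2
        omega
    haveI : Subsingleton (Sylow q G) := (Nat.card_eq_one_iff_unique.mp hone).1
    have hPnormal : (P : Subgroup G).Normal := by
      rw [← Subgroup.normalizer_eq_top_iff, Subgroup.eq_top_iff']
      intro g
      exact Sylow.smul_eq_iff_mem_normalizer.mp (Subsingleton.elim _ _)
    rwa [Sylow.coe_ofCard] at hPnormal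
  -- conjugation exponent k
  obtain ⟨k, hk⟩ : ∃ k : ℕ, b * a * b⁻¹ = a ^ k := by
    obtain ⟨k0, hk0⟩ := Subgroup.mem_zpowers_iff.mp
      (hnormal.conj_mem a (Subgroup.mem_zpowers a) b)
    refine ⟨(k0 % (q : ℤ)).toNat, ?_⟩
    rw [← hk0, ← zpow_natCast, Int.toNat_of_nonneg (Int.emod_nonneg _ (by positivity)),
      ← ha, zpow_mod_orderOf]
  -- commutation rule
  have hcomm : ∀ t m : ℕ, b ^ t * a ^ m = a ^ (m * k ^ t) * b ^ t := by
    have h1 : ∀ m : ℕ, b * a ^ m = a ^ (k * m) * b := by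
      intro m
      have h := congrArg (· ^ m) hk
      simp only [conj_pow, ← pow_mul] at h
      have : b * a ^ m * b⁻¹ * b = a ^ (k * m) * b := by rw [h]
      simpa [mul_assoc] using this
    intro t
    induction t with
    | zero => simp
    | succ t ih =>
      intro m
      rw [pow_succ' b, mul_assoc, ih m, ← mul_assoc, h1, mul_assoc, ← pow_succ' b]
      congr 1
      rw [pow_succ]
      ring_nf
  -- κ := k in ZMod q, κ^p = 1
  have hκp : (k : ZMod q) ^ p = 1 := by
    have h := hcomm p 1
    rw [hbp] at h
    simp only [one_mul, mul_one, pow_one] at h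
    have h2 : a ^ 1 = a ^ (k ^ p) := by simpa using h
    have h3 := pow_eq_pow_iff_modEq.mp h2
    rw [ha] at h3
    have h4 := (ZMod.natCast_eq_natCast_iff _ _ _).mpr h3
    push_cast at h4
    exact h4.symm
  have hκord : orderOf ((k : ZMod q)) ∣ p := orderOf_dvd_of_pow_eq_one hκp
  -- injectivity of the normal form
  have hinj : ∀ s t s' t' : ℕ, a ^ s * b ^ t = a ^ s' * b ^ t' →
      a ^ s = a ^ s' ∧ b ^ t = b ^ t' := by
    intro s t s' t' h
    have hc : (a ^ s')⁻¹ * a ^ s = b ^ t' * (b ^ t)⁻¹ := by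
      have h2 := congrArg (fun x => (a ^ s')⁻¹ * x * (b ^ t)⁻¹) h
      simpa [mul_assoc] using h2
    have hca : (a ^ s')⁻¹ * a ^ s = a ^ ((s : ℤ) - s') := by
      rw [zpow_sub, zpow_natCast, zpow_natCast]; group
    have hcb : (a ^ s')⁻¹ * a ^ s = b ^ ((t' : ℤ) - t) := by
      rw [hc, zpow_sub, zpow_natCast, zpow_natCast]; done
    have hcq : ((a ^ s')⁻¹ * a ^ s) ^ q = 1 := by
      rw [hca, ← zpow_natCast, ← zpow_mul, mul_comm, zpow_mul, zpow_natCast, ← ha,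
        pow_orderOf_eq_one, one_zpow]
    have hcp : ((a ^ s')⁻¹ * a ^ s) ^ p = 1 := by
      rw [hcb, ← zpow_natCast, ← zpow_mul, mul_comm, zpow_mul, zpow_natCast, ← hb,
        pow_orderOf_eq_one, one_zpow]
    have h1 : orderOf ((a ^ s')⁻¹ * a ^ s) ∣ Nat.gcd q p :=
      Nat.dvd_gcd (orderOf_dvd_of_pow_eq_one hcq) (orderOf_dvd_of_pow_eq_one hcp)
    rw [Nat.Coprime.gcd_eq_one ((Nat.coprime_primes hq hp).mpr hne.symm)] at h1
    have hc1 : (a ^ s')⁻¹ * a ^ s = 1 := orderOf_eq_one_iff.mp (Nat.dvd_one.mp h1)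
    constructor
    · rw [inv_mul_eq_one] at hc1; exact hc1.symm
    · have h2 : b ^ t' * (b ^ t)⁻¹ = 1 := hc ▸ hc1
      rw [mul_inv_eq_one] at h2; exact h2.symm
  -- the cycle
  refine ⟨fun i => a ^ i.val * b ^ i.val, ?_⟩
  intro m
  rw [Nat.bijective_iff_injective_and_card]
  refine ⟨?_, by rw [Nat.card_zmod]⟩
  intro i i' hii
  simp only [List.ofFn_succ, List.ofFn_zero, List.prod_cons, List.prod_nil, mul_one] at hii
  -- normal-form the products
  have hgmul : ∀ x y : ZMod (Nat.card G),
      (a ^ x.val * b ^ x.val) * (a ^ y.val * b ^ y.val)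
        = a ^ (x.val + y.val * k ^ x.val) * b ^ (x.val + y.val) := by
    intro x y
    rw [mul_assoc, ← mul_assoc (b ^ x.val) (a ^ y.val) (b ^ y.val), hcomm x.val y.val]
    simp [pow_add, mul_assoc]
  set c0 : ZMod (Nat.card G) := ((m 0 : ℤ) : ZMod (Nat.card G)) with hc0
  set c1 : ZMod (Nat.card G) := ((m 1 : ℤ) : ZMod (Nat.card G)) with hc1
  rw [hgmul, hgmul] at hii
  obtain ⟨hA, hB⟩ := hinj _ _ _ _ hii
  have hTq : (i + c0).val + (i + c1).val ≡ (i' + c0).val + (i' + c1).val [MOD p] := by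
    have := pow_eq_pow_iff_modEq.mp hB; rwa [hb] at this
  have hSq : (i + c0).val + (i + c1).val * k ^ (i + c0).val
      ≡ (i' + c0).val + (i' + c1).val * k ^ (i' + c0).val [MOD q] := by
    have := pow_eq_pow_iff_modEq.mp hA; rwa [ha] at this
  -- cast homs
  set φ : ZMod (Nat.card G) →+* ZMod p := ZMod.castHom hdvdp (ZMod p) with hφ
  set ψ : ZMod (Nat.card G) →+* ZMod q := ZMod.castHom hdvdq (ZMod q) with hψ
  have hφval : ∀ z : ZMod (Nat.card G), ((z.val : ℕ) : ZMod p) = φ z := by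
    intro z; rw [hφ, ZMod.castHom_apply, ZMod.natCast_val]
  have hψval : ∀ z : ZMod (Nat.card G), ((z.val : ℕ) : ZMod q) = ψ z := by
    intro z; rw [hψ, ZMod.castHom_apply, ZMod.natCast_val]
  -- mod p: φ i = φ i'
  have h2p : (2 : ZMod p) ≠ 0 := by
    have h2 : ((2 : ℕ) : ZMod p) ≠ 0 := by
      rw [Ne, ZMod.natCast_eq_zero_iff]
      intro hd; have := Nat.le_of_dvd (by norm_num) hd; omega
    simpa using h2
  have hTeq : φ (i + c0) + φ (i + c1) = φ (i' + c0) + φ (i' + c1) := by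
    have := (ZMod.natCast_eq_natCast_iff _ _ _).mpr hTq
    push_cast at this
    rwa [hφval, hφval, hφval, hφval] at this
  have hφi : φ i = φ i' := by
    apply mul_left_cancel₀ h2p
    have e1 : φ (i + c0) = φ i + φ c0 := map_add φ i c0
    have e2 : φ (i + c1) = φ i + φ c1 := map_add φ i c1
    have e3 : φ (i' + c0) = φ i' + φ c0 := map_add φ i' c0
    have e4 : φ (i' + c1) = φ i' + φ c1 := map_add φ i' c1
    rw [e1, e2, e3, e4] at hTeq
    ring_nf
    ring_nf at hTeq
    linear_combination hTeq
  -- powers of κ agree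
  have hxmod : (i + c0).val ≡ (i' + c0).val [MOD p] := by
    have : φ (i + c0) = φ (i' + c0) := by rw [map_add, map_add, hφi]
    rw [← hφval, ← hφval] at this
    exact (ZMod.natCast_eq_natCast_iff _ _ _).mp this
  have hκpow : ∀ s : ℕ, (k : ZMod q) ^ s = (k : ZMod q) ^ (s % p) := by
    intro s
    conv_lhs => rw [← Nat.div_add_mod s p]
    rw [pow_add, pow_mul, hκp, one_pow, one_mul]
  have hw : (k : ZMod q) ^ (i + c0).val = (k : ZMod q) ^ (i' + c0).val := by
    rw [hκpow ((i + c0).val), hκpow ((i' + c0).val)]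
    exact congrArg (fun t => ((k : ZMod q)) ^ t) hxmod
  -- mod q: ψ i = ψ i'
  have hSeq : ψ (i + c0) + ψ (i + c1) * (k : ZMod q) ^ (i + c0).val
      = ψ (i' + c0) + ψ (i' + c1) * (k : ZMod q) ^ (i' + c0).val := by
    have := (ZMod.natCast_eq_natCast_iff _ _ _).mpr hSq
    push_cast at this
    rwa [hψval, hψval, hψval, hψval] at this
  have h1w : (1 : ZMod q) + (k : ZMod q) ^ (i + c0).val ≠ 0 := by
    intro h0
    have hw1 : (k : ZMod q) ^ (i + c0).val = -1 := by linear_combination h0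
    have hwp : ((k : ZMod q) ^ (i + c0).val) ^ p = 1 := by
      rw [← pow_mul, mul_comm, pow_mul, hκp, one_pow]
    rw [hw1, hpodd.neg_one_pow] at hwp
    have h2 : ((2 : ℕ) : ZMod q) = 0 := by push_cast; linear_combination -hwp
    rw [ZMod.natCast_eq_zero_iff] at h2
    have := Nat.le_of_dvd (by norm_num) h2; omega
  have hψi : ψ i = ψ i' := by
    apply mul_right_cancel₀ h1w
    rw [map_add, map_add, map_add, map_add] at hSeq
    linear_combination hSeq - (ψ i' + ψ c1) * hw
  -- CRT finish
  have hip : i.val ≡ i'.val [MOD p] := by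
    have : ((i.val : ℕ) : ZMod p) = ((i'.val : ℕ) : ZMod p) := by
      rw [hφval, hφval, hφi]
    exact (ZMod.natCast_eq_natCast_iff _ _ _).mp this
  have hiq : i.val ≡ i'.val [MOD q] := by
    have : ((i.val : ℕ) : ZMod q) = ((i'.val : ℕ) : ZMod q) := by
      rw [hψval, hψval, hψi]
    exact (ZMod.natCast_eq_natCast_iff _ _ _).mp this
  have hmul : i.val ≡ i'.val [MOD p * q] :=
    (Nat.modEq_and_modEq_iff_modEq_mul ((Nat.coprime_primes hp hq).mpr hne)).mp ⟨hip, hiq⟩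
  rw [← hcard] at hmul
  have hfin : ((i.val : ℕ) : ZMod (Nat.card G)) = ((i'.val : ℕ) : ZMod (Nat.card G)) :=
    (ZMod.natCast_eq_natCast_iff _ _ _).mpr hmul
  simpa [ZMod.natCast_val, ZMod.cast_id] using hfin
end

section
/- Let l ≥ 1 be an integer divisible by 3 and let D_l be the dihedral group of order 2l. Then D_l is unround: it is not k-round for any integer k ≥ 2. -/
namespace Statement14Aux

open DihedralGroup

/-- The projection `D_l → D_3` (requires `3 ∣ l`). -/
def projFun (l : ℕ) (h3 : (3 : ℕ) ∣ l) : DihedralGroup l → DihedralGroup 3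
  | .r a => .r (ZMod.castHom h3 (ZMod 3) a)
  | .sr a => .sr (ZMod.castHom h3 (ZMod 3) a)

@[simp] lemma projFun_r (l : ℕ) (h3 : (3 : ℕ) ∣ l) (a : ZMod l) :
    projFun l h3 (.r a) = .r (ZMod.castHom h3 (ZMod 3) a) := rfl

@[simp] lemma projFun_sr (l : ℕ) (h3 : (3 : ℕ) ∣ l) (a : ZMod l) :
    projFun l h3 (.sr a) = .sr (ZMod.castHom h3 (ZMod 3) a) := rfl

/-- The projection as a monoid hom. -/
def proj (l : ℕ) (h3 : (3 : ℕ) ∣ l) : DihedralGroup l →* DihedralGroup 3 where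
  toFun := projFun l h3
  map_one' := by
    rw [one_def, one_def, projFun_r, map_zero]
  map_mul' := by
    rintro (a | a) (b | b) <;>
      simp [r_mul_r, r_mul_sr, sr_mul_r, sr_mul_sr, map_add, map_sub]

/-- every element of `D₃` has order dividing 6. -/
lemma d3_pow_six : ∀ x : DihedralGroup 3, x ^ 6 = 1 := by decide

lemma d3_pow_mod (x : DihedralGroup 3) (e : ℕ) : x ^ e = x ^ (e % 6) := by
  conv_lhs => rw [← Nat.div_add_mod e 6]
  rw [pow_add, pow_mul]
  rw [d3_pow_six x, one_pow, one_mul]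

lemma d3_one_ne_r1 : ¬((1 : DihedralGroup 3) = DihedralGroup.r 1) := by decide
lemma d3_pow2 : ∀ x : DihedralGroup 3, ¬(x ^ 2 = DihedralGroup.sr 0) := by decide
lemma d3_pow3 : ∀ x : DihedralGroup 3, ¬(x ^ 3 = DihedralGroup.r 1) := by decide
lemma d3_pow4 : ∀ x : DihedralGroup 3, ¬(x ^ 4 = DihedralGroup.sr 0) := by decide
lemma d3_pow5_r : ∀ x : DihedralGroup 3, x ^ 5 = DihedralGroup.r 1 → x = DihedralGroup.r 2 := by
  decide
lemma d3_pow5_sr : ∀ x : DihedralGroup 3, x ^ 5 = DihedralGroup.sr 0 → x = DihedralGroup.sr 0 := by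
  decide

lemma d3_key5 : ∀ x y : DihedralGroup 3,
    x ^ 2 * (y * (x * y)) = 1 → x ^ 2 * (x * (y * y)) = 1 := by decide
lemma d3_key1 : ∀ x y : DihedralGroup 3,
    x ^ 4 * (x * (y * y)) = 1 → x ^ 4 * (y * (x * y)) = 1 := by decide

lemma d3_mem5a : (DihedralGroup.r 2 : DihedralGroup 3) ^ 2 *
    (DihedralGroup.r 2 * (DihedralGroup.sr 0 * DihedralGroup.sr 0)) = 1 := by decide
lemma d3_mem5b : ¬((DihedralGroup.r 2 : DihedralGroup 3) ^ 2 *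
    (DihedralGroup.sr 0 * (DihedralGroup.r 2 * DihedralGroup.sr 0)) = 1) := by decide
lemma d3_mem1a : (DihedralGroup.r 1 : DihedralGroup 3) ^ 4 *
    (DihedralGroup.sr 0 * (DihedralGroup.r 1 * DihedralGroup.sr 0)) = 1 := by decide
lemma d3_mem1b : ¬((DihedralGroup.r 1 : DihedralGroup 3) ^ 4 *
    (DihedralGroup.r 1 * (DihedralGroup.sr 0 * DihedralGroup.sr 0)) = 1) := by decide

/-- helper: product of an `ofFn` of an appended pair of tuples. -/
lemma prod_ofFn_append {M : Type*} [Monoid M] {a b : ℕ} (u : Fin a → M) (v : Fin b → M) :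
    (List.ofFn (Fin.append u v)).prod = (List.ofFn u).prod * (List.ofFn v).prod := by
  rw [List.ofFn_fin_append, List.prod_append]

/-- the key word computation: a block of `c` zeros followed by three shifts. -/
lemma word3 {G : Type*} [Monoid G] {N : ℕ} (c : ℕ) (g : ZMod N → G) (z₁ z₂ z₃ : ℤ)
    (i : ZMod N) :
    (List.ofFn fun j : Fin (c + 3) =>
        g (i + ((Fin.append (fun _ : Fin c => (0 : ℤ)) ![z₁, z₂, z₃] j : ℤ) : ZMod N))).prod
      = g i ^ c * (g (i + (z₁ : ZMod N)) * (g (i + (z₂ : ZMod N)) * g (i + (z₃ : ZMod N)))) := by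
  have hfn : (fun j : Fin (c + 3) =>
      g (i + ((Fin.append (fun _ : Fin c => (0 : ℤ)) ![z₁, z₂, z₃] j : ℤ) : ZMod N)))
      = Fin.append (fun _ : Fin c => g i)
          ![g (i + (z₁ : ZMod N)), g (i + (z₂ : ZMod N)), g (i + (z₃ : ZMod N))] := by
    funext j
    refine Fin.addCases (fun p => ?_) (fun p => ?_) j
    · simp [Fin.append_left]
    · fin_cases p <;> simp [Fin.append_right]
  rw [hfn, prod_ofFn_append, List.ofFn_const, List.prod_replicate]
  congr 1
  simp [List.ofFn_succ]

end Statement14Aux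

open Statement14Aux DihedralGroup in
/-- For `l ≥ 1` divisible by 3, the dihedral group `D_l` of order `2l` is unround:
it is not `k`-round for any `k ≥ 2`. -/
theorem statement14 (l : ℕ) (hl : 1 ≤ l) (h3 : 3 ∣ l) :
    ∀ k : ℕ, 2 ≤ k → ¬ IsKRound (DihedralGroup l) k := by
  intro k hk hround
  obtain ⟨g, hg⟩ := hround
  haveI : NeZero l := ⟨by omega⟩
  have hncard : Nat.card (DihedralGroup l) = 2 * l := DihedralGroup.nat_card
  haveI : NeZero (Nat.card (DihedralGroup l)) := ⟨by omega⟩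
  let ψ : DihedralGroup l →* DihedralGroup 3 := proj l h3
  -- the power map `i ↦ g i ^ k` is bijective
  have hpow : Function.Bijective fun i : ZMod (Nat.card (DihedralGroup l)) => g i ^ k := by
    have h0 := hg fun _ => (0 : ℤ)
    simpa only [Int.cast_zero, add_zero, List.ofFn_const, List.prod_replicate] using h0
  -- two special indices
  obtain ⟨i₀, hi₀'⟩ := hpow.surjective (DihedralGroup.r (1 : ZMod l))
  obtain ⟨i₁, hi₁'⟩ := hpow.surjective (DihedralGroup.sr (0 : ZMod l))
  have hi₀ : g i₀ ^ k = DihedralGroup.r (1 : ZMod l) := hi₀'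
  have hi₁ : g i₁ ^ k = DihedralGroup.sr (0 : ZMod l) := hi₁'
  -- their images in D₃
  have hx₀ : (ψ (g i₀)) ^ k = DihedralGroup.r (1 : ZMod 3) := by
    rw [← map_pow, hi₀]
    exact congrArg DihedralGroup.r (map_one (ZMod.castHom h3 (ZMod 3)))
  have hy₀ : (ψ (g i₁)) ^ k = DihedralGroup.sr (0 : ZMod 3) := by
    rw [← map_pow, hi₁]
    exact congrArg DihedralGroup.sr (map_zero (ZMod.castHom h3 (ZMod 3)))
  have h6 : k % 6 = 0 ∨ k % 6 = 1 ∨ k % 6 = 2 ∨ k % 6 = 3 ∨ k % 6 = 4 ∨ k % 6 = 5 := by omega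
  -- a cast fact we will need
  set d : ZMod (Nat.card (DihedralGroup l)) := i₁ - i₀ with hd
  have hcast : (((d.val : ℤ)) : ZMod (Nat.card (DihedralGroup l))) = d := by
    rw [Int.cast_natCast, ZMod.natCast_val, ZMod.cast_id]
  have hio : i₀ + d = i₁ := by rw [hd]; ring
  rcases h6 with h6 | h6 | h6 | h6 | h6 | h6
  · rw [d3_pow_mod, h6, pow_zero] at hx₀
    exact d3_one_ne_r1 hx₀
  · -- k ≡ 1 (mod 6), so k ≥ 7
    rw [d3_pow_mod, h6, pow_one] at hx₀ hy₀
    obtain ⟨c, rfl⟩ : ∃ c, k = c + 3 := ⟨k - 3, by omega⟩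
    have hc : c % 6 = 4 := by omega
    -- word 1 : m = (0,…,0,0,d,d), word 2 : m = (0,…,0,d,0,d)
    have hB₁ := hg (Fin.append (fun _ : Fin c => (0 : ℤ)) ![0, (d.val : ℤ), (d.val : ℤ)])
    have hB₂ := hg (Fin.append (fun _ : Fin c => (0 : ℤ)) ![(d.val : ℤ), 0, (d.val : ℤ)])
    simp only [word3, Int.cast_zero, add_zero, hcast] at hB₁ hB₂
    classical
    have hcard₁ : (Finset.univ.filter
          (fun i => ψ (g i ^ c * (g i * (g (i + d) * g (i + d)))) = 1)).card
        = (Finset.univ.filter fun x : DihedralGroup l => ψ x = 1).card := by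
      refine Finset.card_equiv (Equiv.ofBijective _ hB₁) fun i => ?_
      simp [Equiv.ofBijective, Finset.mem_filter]
    have hcard₂ : (Finset.univ.filter
          (fun i => ψ (g i ^ c * (g (i + d) * (g i * g (i + d)))) = 1)).card
        = (Finset.univ.filter fun x : DihedralGroup l => ψ x = 1).card := by
      refine Finset.card_equiv (Equiv.ofBijective _ hB₂) fun i => ?_
      simp [Equiv.ofBijective, Finset.mem_filter]
    have hsub : (Finset.univ.filter
          (fun i => ψ (g i ^ c * (g i * (g (i + d) * g (i + d)))) = 1))
        ⊆ (Finset.univ.filter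
          (fun i => ψ (g i ^ c * (g (i + d) * (g i * g (i + d)))) = 1)) := by
      intro i hi
      rw [Finset.mem_filter] at hi ⊢
      refine ⟨Finset.mem_univ _, ?_⟩
      have h1 := hi.2
      rw [map_mul, map_mul, map_mul, map_pow, d3_pow_mod _ c, hc] at h1 ⊢
      exact d3_key1 _ _ h1
    have hmem₂ : i₀ ∈ (Finset.univ.filter
          (fun i => ψ (g i ^ c * (g (i + d) * (g i * g (i + d)))) = 1)) := by
      rw [Finset.mem_filter]
      refine ⟨Finset.mem_univ _, ?_⟩
      rw [map_mul, map_mul, map_mul, map_pow, d3_pow_mod _ c, hc, hio, hx₀, hy₀]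
      exact d3_mem1a
    have hmem₁ : i₀ ∉ (Finset.univ.filter
          (fun i => ψ (g i ^ c * (g i * (g (i + d) * g (i + d)))) = 1)) := by
      rw [Finset.mem_filter]
      rintro ⟨-, h1⟩
      rw [map_mul, map_mul, map_mul, map_pow, d3_pow_mod _ c, hc, hio, hx₀, hy₀] at h1
      exact d3_mem1b h1
    have hlt : (Finset.univ.filter
          (fun i => ψ (g i ^ c * (g i * (g (i + d) * g (i + d)))) = 1)).card
        < (Finset.univ.filter
          (fun i => ψ (g i ^ c * (g (i + d) * (g i * g (i + d)))) = 1)).card :=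
      Finset.card_lt_card ⟨hsub, fun hsup => hmem₁ (hsup hmem₂)⟩
    omega
  · rw [d3_pow_mod, h6] at hy₀
    exact d3_pow2 _ hy₀
  · rw [d3_pow_mod, h6] at hx₀
    exact d3_pow3 _ hx₀
  · rw [d3_pow_mod, h6] at hy₀
    exact d3_pow4 _ hy₀
  · -- k ≡ 5 (mod 6), so k ≥ 5
    rw [d3_pow_mod, h6] at hx₀ hy₀
    have hx : ψ (g i₀) = DihedralGroup.r 2 := d3_pow5_r _ hx₀
    have hy : ψ (g i₁) = DihedralGroup.sr 0 := d3_pow5_sr _ hy₀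
    obtain ⟨c, rfl⟩ : ∃ c, k = c + 3 := ⟨k - 3, by omega⟩
    have hc : c % 6 = 2 := by omega
    have hB₁ := hg (Fin.append (fun _ : Fin c => (0 : ℤ)) ![0, (d.val : ℤ), (d.val : ℤ)])
    have hB₂ := hg (Fin.append (fun _ : Fin c => (0 : ℤ)) ![(d.val : ℤ), 0, (d.val : ℤ)])
    simp only [word3, Int.cast_zero, add_zero, hcast] at hB₁ hB₂
    classical
    have hcard₁ : (Finset.univ.filter
          (fun i => ψ (g i ^ c * (g i * (g (i + d) * g (i + d)))) = 1)).card
        = (Finset.univ.filter fun x : DihedralGroup l => ψ x = 1).card := by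
      refine Finset.card_equiv (Equiv.ofBijective _ hB₁) fun i => ?_
      simp [Equiv.ofBijective, Finset.mem_filter]
    have hcard₂ : (Finset.univ.filter
          (fun i => ψ (g i ^ c * (g (i + d) * (g i * g (i + d)))) = 1)).card
        = (Finset.univ.filter fun x : DihedralGroup l => ψ x = 1).card := by
      refine Finset.card_equiv (Equiv.ofBijective _ hB₂) fun i => ?_
      simp [Equiv.ofBijective, Finset.mem_filter]
    have hsub : (Finset.univ.filter
          (fun i => ψ (g i ^ c * (g (i + d) * (g i * g (i + d)))) = 1))
        ⊆ (Finset.univ.filter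
          (fun i => ψ (g i ^ c * (g i * (g (i + d) * g (i + d)))) = 1)) := by
      intro i hi
      rw [Finset.mem_filter] at hi ⊢
      refine ⟨Finset.mem_univ _, ?_⟩
      have h1 := hi.2
      rw [map_mul, map_mul, map_mul, map_pow, d3_pow_mod _ c, hc] at h1 ⊢
      exact d3_key5 _ _ h1
    have hmem₁ : i₀ ∈ (Finset.univ.filter
          (fun i => ψ (g i ^ c * (g i * (g (i + d) * g (i + d)))) = 1)) := by
      rw [Finset.mem_filter]
      refine ⟨Finset.mem_univ _, ?_⟩
      rw [map_mul, map_mul, map_mul, map_pow, d3_pow_mod _ c, hc, hio, hx, hy]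
      exact d3_mem5a
    have hmem₂ : i₀ ∉ (Finset.univ.filter
          (fun i => ψ (g i ^ c * (g (i + d) * (g i * g (i + d)))) = 1)) := by
      rw [Finset.mem_filter]
      rintro ⟨-, h1⟩
      rw [map_mul, map_mul, map_mul, map_pow, d3_pow_mod _ c, hc, hio, hx, hy] at h1
      exact d3_mem5b h1
    have hlt : (Finset.univ.filter
          (fun i => ψ (g i ^ c * (g (i + d) * (g i * g (i + d)))) = 1)).card
        < (Finset.univ.filter
          (fun i => ψ (g i ^ c * (g i * (g (i + d) * g (i + d)))) = 1)).card :=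
      Finset.card_lt_card ⟨hsub, fun hsup => hmem₂ (hsup hmem₁)⟩
    omega
end

section
/- Let G be a finite nilpotent group of odd order n. Then G admits a 1-1 cycle g of length n such that S^m(g) is a 1-1 cycle for every positive integer m, where S is the summation operator S(g)(i) = g(i)·g(i+1). -/
/-- The summation operator `S` on cycles of length `L` over `G`:
`S(g)(i) = g(i) * g(i+1)`. -/
def Sop {G : Type*} [Group G] {L : ℕ} (g : ZMod L → G) : ZMod L → G :=
  fun i => g i * g (i + 1)

section Aux

/-- `Sop` commutes with postcomposition by group homomorphisms. -/
lemma Sop_comp_hom {G H : Type*} [Group G] [Group H] (φ : G →* H) {L : ℕ} :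
    ∀ (r : ℕ) (g : ZMod L → G) (i : ZMod L), φ (Sop^[r] g i) = Sop^[r] (fun j => φ (g j)) i := by
  intro r
  induction r with
  | zero => intro g i; rfl
  | succ r ih =>
    intro g i
    rw [Function.iterate_succ_apply, Function.iterate_succ_apply, ih (Sop g)]
    have hfe : (fun j => φ (Sop g j)) = Sop (fun j => φ (g j)) := by
      funext j
      simp [Sop, map_mul]
    rw [hfe]

/-- `Sop` commutes with precomposition by maps commuting with `+1`. -/
lemma Sop_comp_shift {G : Type*} [Group G] {L L' : ℕ} (σ : ZMod L → ZMod L')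
    (hσ : ∀ i, σ (i + 1) = σ i + 1) :
    ∀ (r : ℕ) (g : ZMod L' → G) (i : ZMod L), Sop^[r] g (σ i) = Sop^[r] (fun j => g (σ j)) i := by
  intro r
  induction r with
  | zero => intro g i; rfl
  | succ r ih =>
    intro g i
    rw [Function.iterate_succ_apply, Function.iterate_succ_apply, ih (Sop g)]
    have hfe : (fun j => Sop g (σ j)) = Sop (fun j => g (σ j)) := by
      funext j
      simp [Sop, hσ j]
    rw [hfe]

/-- `Sop` splits over a pointwise product when the second factor is central-valued. -/
lemma Sop_mul_central {G : Type*} [Group G] {L : ℕ} (h w : ZMod L → G)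
    (hw : ∀ i x, w i * x = x * w i) :
    ∀ r : ℕ, (∀ i, Sop^[r] (fun j => h j * w j) i = Sop^[r] h i * Sop^[r] w i)
      ∧ (∀ i x, Sop^[r] w i * x = x * Sop^[r] w i) := by
  intro r
  induction r with
  | zero => exact ⟨fun i => rfl, hw⟩
  | succ r ih =>
    obtain ⟨ih1, ih2⟩ := ih
    constructor
    · intro i
      rw [Function.iterate_succ_apply', Function.iterate_succ_apply',
        Function.iterate_succ_apply']
      show Sop^[r] (fun j => h j * w j) i * Sop^[r] (fun j => h j * w j) (i + 1)
          = (Sop^[r] h i * Sop^[r] h (i + 1)) * (Sop^[r] w i * Sop^[r] w (i + 1))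
      rw [ih1 i, ih1 (i + 1)]
      rw [mul_assoc, mul_assoc, ← mul_assoc (Sop^[r] w i), ih2 i (Sop^[r] h (i + 1)), mul_assoc]
    · intro i x
      rw [Function.iterate_succ_apply']
      show Sop^[r] w i * Sop^[r] w (i + 1) * x = x * (Sop^[r] w i * Sop^[r] w (i + 1))
      rw [mul_assoc, ih2 (i + 1) x, ← mul_assoc, ih2 i x, mul_assoc]

/-- The additive analogue of `Sop`, used to track central exponents. -/
def AE {L p : ℕ} (ch : ZMod L → ZMod p) : ZMod L → ZMod p := fun i => ch i + ch (i + 1)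

lemma zpow_val_add {G : Type*} [Group G] {p : ℕ} [NeZero p] (z : G) (hz : orderOf z = p)
    (a b : ZMod p) : z ^ (a + b).val = z ^ a.val * z ^ b.val := by
  rw [← pow_add]
  apply pow_eq_pow_iff_modEq.mpr
  rw [hz, ZMod.val_add]
  exact Nat.mod_modEq _ p

lemma zpow_val_inj {G : Type*} [Group G] {p : ℕ} [NeZero p] (z : G) (hz : orderOf z = p)
    {a b : ZMod p} (h : z ^ a.val = z ^ b.val) : a = b := by
  have := pow_eq_pow_iff_modEq.mp h
  rw [hz] at this
  have ha := ZMod.val_lt a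
  have hb := ZMod.val_lt b
  have h2 : a.val % p = b.val % p := this
  rw [Nat.mod_eq_of_lt ha, Nat.mod_eq_of_lt hb] at h2
  exact ZMod.val_injective p h2

/-- Iterating `Sop` on a central power sequence matches iterating `AE` on exponents. -/
lemma Sop_zpow {G : Type*} [Group G] {L p : ℕ} [NeZero p] (z : G) (hz : orderOf z = p)
    (ch : ZMod L → ZMod p) :
    ∀ (r : ℕ) (i : ZMod L), Sop^[r] (fun j => z ^ (ch j).val) i = z ^ ((AE^[r] ch) i).val := by
  intro r
  induction r generalizing ch with
  | zero => intro i; rfl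
  | succ r ih =>
    intro i
    rw [Function.iterate_succ_apply, Function.iterate_succ_apply]
    have : Sop (fun j => z ^ (ch j).val) = fun j => z ^ ((AE ch) j).val := by
      funext j
      show z ^ (ch j).val * z ^ (ch (j + 1)).val = z ^ (AE ch j).val
      rw [AE, zpow_val_add z hz]
    rw [this, ih (AE ch)]

/-- key natural number division identity -/
lemma nat_div_key (X e m p : ℕ) (hm : 0 < m) (hX : X < m * p) :
    ((X + m * e) % (m * p)) / m = (X / m + e) % p := by
  have hp : 0 < p := by
    rcases Nat.eq_zero_or_pos p with h | h
    · subst h; simp at hX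
    · exact h
  set s := X / m with hs
  set u := X % m with hu
  set k := (s + e) / p with hk
  set s' := (s + e) % p with hs'
  have h2 : p * k + s' = s + e := Nat.div_add_mod (s + e) p
  have h3 : m * s + u = X := Nat.div_add_mod X m
  have h4 : X + m * e = m * p * k + (u + m * s') := by
    calc X + m * e = m * s + u + m * e := by rw [h3]
      _ = m * (s + e) + u := by ring
      _ = m * (p * k + s') + u := by rw [h2]
      _ = m * p * k + (u + m * s') := by ring
  have hult : u < m := Nat.mod_lt _ hm
  have hs'lt : s' < p := Nat.mod_lt _ hp
  have h5 : u + m * s' < m * p := by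
    have h6 : m * (s' + 1) = m * s' + m := by ring
    have h7 : m * (s' + 1) ≤ m * p := Nat.mul_le_mul_left m hs'lt
    omega
  rw [h4, Nat.mul_add_mod, Nat.mod_eq_of_lt h5, Nat.add_mul_div_left _ _ hm,
    Nat.div_eq_of_lt hult, zero_add]

/-- Finite nilpotent nontrivial groups have nontrivial center. -/
lemma center_nontrivial_of_nilpotent (G : Type*) [Group G] [Nontrivial G]
    (h : Group.IsNilpotent G) : Nontrivial (Subgroup.center G) := by
  by_contra hc
  have hsub : Subsingleton (Subgroup.center G) := not_nontrivial_iff_subsingleton.mp hc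
  have hcb : Subgroup.center G = ⊥ := by
    rw [Subgroup.eq_bot_iff_forall]
    intro x hx
    have : (⟨x, hx⟩ : Subgroup.center G) = ⟨1, Subgroup.one_mem _⟩ := Subsingleton.elim _ _
    exact congrArg Subtype.val this
  obtain ⟨k, hk⟩ := h.nilpotent'
  have hall : ∀ j, Subgroup.upperCentralSeries G j = ⊥ := by
    intro j
    induction j with
    | zero => exact upperCentralSeries_zero G
    | succ j ihj =>
      rw [Subgroup.eq_bot_iff_forall]
      intro x hx
      rw [mem_upperCentralSeries_succ_iff] at hx
      have hxc : x ∈ Subgroup.center G := by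
        rw [Subgroup.mem_center_iff]
        intro g
        have := hx g
        rw [ihj, Subgroup.mem_bot] at this
        have h1 : x * g = g * x := by
          have h2 : x * g * x⁻¹ * g⁻¹ * g = 1 * g := by rw [← commutatorElement_def, this]
          rw [one_mul, mul_assoc, inv_mul_cancel, mul_one] at h2
          calc x * g = x * g * x⁻¹ * x := by rw [mul_assoc, inv_mul_cancel, mul_one]
            _ = g * x := by rw [h2]
        exact h1.symm
      rw [hcb, Subgroup.mem_bot] at hxc
      exact hxc
  rw [hall k] at hk
  exact bot_ne_top hk

end Aux

/-- The key inductive lemma: any finite nilpotent group of odd order `n` has a cycle all of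
whose `Sop`-iterates (including the `0`-th, i.e. the cycle itself) are bijective. -/
lemma key_lemma : ∀ (n : ℕ) (G : Type u) [Group G] [Finite G], Group.IsNilpotent G →
    Nat.card G = n → Odd n → ∃ g : ZMod n → G, ∀ r : ℕ, Function.Bijective (Sop^[r] g) := by
  intro n
  induction n using Nat.strong_induction_on with
  | _ n ih =>
  intro G _ _ hnil hcard hodd
  haveI := hnil
  have hnpos : 0 < n := hcard ▸ Nat.card_pos
  by_cases hn1 : n = 1
  · subst hn1
    have hsub : Subsingleton G := by
      have := Nat.card_eq_one_iff_unique.mp hcard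
      exact this.1
    refine ⟨fun _ => 1, fun r => ⟨fun a b _ => Subsingleton.elim a b, fun y => ⟨0, Subsingleton.elim _ _⟩⟩⟩
  · -- G is nontrivial
    haveI hGnt : Nontrivial G := by
      rw [← Finite.one_lt_card_iff_nontrivial]
      omega
    haveI hcnt := center_nontrivial_of_nilpotent G hnil
    -- pick a central element z of prime order p
    set p := (Nat.card (Subgroup.center G)).minFac with hpdef
    have hccard : 1 < Nat.card (Subgroup.center G) := Finite.one_lt_card_iff_nontrivial.mpr hcnt
    have hp : p.Prime := Nat.minFac_prime (by omega)
    haveI : Fact p.Prime := ⟨hp⟩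
    obtain ⟨x, hx⟩ := exists_prime_orderOf_dvd_card' (G := Subgroup.center G) p
      (Nat.minFac_dvd _)
    set z := (x : G) with hzdef
    have hzc : z ∈ Subgroup.center G := x.2
    have horder : orderOf z = p := (Subgroup.orderOf_coe x).trans hx
    have hpdvd : p ∣ n := hcard ▸ (horder ▸ orderOf_dvd_natCard z)
    have hpodd : Odd p := by
      obtain ⟨t, ht⟩ := hpdvd
      rw [ht] at hodd
      exact (Nat.odd_mul.mp hodd).1
    have hp2 : p ≠ 2 := by
      intro h
      rw [h] at hpodd
      exact (Nat.not_odd_iff_even.mpr (by decide)) hpodd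
    set Z := Subgroup.zpowers z with hZdef
    have hZle : Z ≤ Subgroup.center G := Subgroup.zpowers_le.mpr hzc
    haveI hZn : Z.Normal := by
      constructor
      intro a ha g
      have hcomm : g * a = a * g := (Subgroup.mem_center_iff.mp (hZle ha) g)
      have : g * a * g⁻¹ = a := by rw [hcomm, mul_assoc, mul_inv_cancel, mul_one]
      rwa [this]
    have hZcard : Nat.card Z = p := by rw [Nat.card_zpowers, horder]
    set m := Nat.card (G ⧸ Z) with hmdef
    have hnm : n = m * p := by
      rw [← hcard, Subgroup.card_eq_card_quotient_mul_card_subgroup Z, hZcard]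
    have hmpos : 0 < m := Nat.card_pos
    have hmlt : m < n := by
      have h2 := hp.two_le
      have h3 : m * 2 ≤ m * p := Nat.mul_le_mul_left m h2
      omega
    have hmodd : Odd m := by
      rw [hnm] at hodd
      exact (Nat.odd_mul.mp hodd).1
    obtain ⟨gbar, hgbar⟩ := ih m hmlt (G ⧸ Z) inferInstance rfl hmodd
    haveI : NeZero n := ⟨by omega⟩
    haveI : NeZero m := ⟨by omega⟩
    haveI : NeZero p := ⟨hp.ne_zero⟩
    set ρ : ZMod n →+* ZMod m := ZMod.castHom ⟨p, hnm⟩ (ZMod m) with hρdef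
    have hρadd : ∀ i j : ZMod n, ρ (i + j) = ρ i + ρ j := fun i j => map_add ρ i j
    have hρone : ρ 1 = 1 := map_one ρ
    set c : ZMod n → ZMod p := fun i => ((i.val / m : ℕ) : ZMod p) with hcdef
    set h : ZMod n → G := fun i => (gbar (ρ i)).out with hhdef
    set w : ZMod n → G := fun i => z ^ (c i).val with hwdef
    set g : ZMod n → G := fun i => h i * w i with hgdef
    -- centrality of w
    have hwc : ∀ i y, w i * y = y * w i := by
      intro i y
      have : w i ∈ Subgroup.center G := by
        rw [hwdef]
        exact Subgroup.pow_mem _ hzc _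
      exact (Subgroup.mem_center_iff.mp this y).symm
    -- mk of g
    have hρker : ∀ d : ZMod n, ρ d = 0 ↔ m ∣ d.val := by
      intro d
      rw [hρdef, ZMod.castHom_apply, ← ZMod.natCast_val, ZMod.natCast_eq_zero_iff]
    -- key additivity of c on the kernel of ρ
    have hQadd : ∀ y d : ZMod n, m ∣ d.val → c (y + d) = c y + c d := by
      intro y d hdvd
      obtain ⟨e, he⟩ := hdvd
      have hX : y.val < m * p := hnm ▸ ZMod.val_lt y
      have hval : (y + d).val / m = (y.val / m + e) % p := by
        have h0 : (y + d).val = (y.val + m * e) % n := by rw [ZMod.val_add, he]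
        have h1 := nat_div_key y.val e m p hmpos hX
        rw [← hnm] at h1
        rw [h0]
        exact h1
      have hde : d.val / m = e := by rw [he, Nat.mul_div_cancel_left e hmpos]
      show (((y + d).val / m : ℕ) : ZMod p)
          = (((y.val / m : ℕ) : ZMod p)) + (((d.val / m : ℕ) : ZMod p))
      rw [hval, hde, ZMod.natCast_mod, Nat.cast_add]
    -- AE iterates of c on the kernel
    have hAE : ∀ d : ZMod n, m ∣ d.val → ∀ (r : ℕ) (y : ZMod n),
        AE^[r] c (y + d) = AE^[r] c y + 2 ^ r * c d := by
      intro d hdvd r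
      induction r with
      | zero => intro y; simpa using hQadd y d hdvd
      | succ r ihr =>
        intro y
        rw [Function.iterate_succ_apply']
        show AE^[r] c (y + d) + AE^[r] c (y + d + 1) = (AE^[r] c y + AE^[r] c (y + 1)) + 2 ^ (r + 1) * c d
        have : y + d + 1 = (y + 1) + d := by ring
        rw [this, ihr y, ihr (y + 1)]
        ring
    -- the quotient projection of iterates of g
    set φ : G →* G ⧸ Z := QuotientGroup.mk' Z with hφdef
    have hφg : ∀ j : ZMod n, φ (g j) = gbar (ρ j) := by
      intro j
      rw [hgdef]
      simp only []
      rw [map_mul, hwdef]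
      simp only []
      rw [map_pow]
      have hφz : φ z = 1 := by
        rw [hφdef, QuotientGroup.mk'_apply, QuotientGroup.eq_one_iff]
        exact Subgroup.mem_zpowers z
      rw [hφz, one_pow, mul_one, hhdef]
      simp only []
      rw [hφdef, QuotientGroup.mk'_apply, QuotientGroup.out_eq']
    refine ⟨g, fun r => ?_⟩
    rw [Nat.bijective_iff_injective_and_card]
    refine ⟨?_, by rw [Nat.card_zmod, hcard]⟩
    intro i i' heq
    -- step 1: quotient values agree
    have h1 : Sop^[r] gbar (ρ i) = Sop^[r] gbar (ρ i') := by
      have hcomm : ∀ j : ZMod n, Sop^[r] gbar (ρ j) = φ (Sop^[r] g j) := by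
        intro j
        rw [Sop_comp_shift ρ (fun i => by rw [hρadd, hρone]) r gbar j,
          Sop_comp_hom φ r g j]
        have hfe : (fun j' => gbar (ρ j')) = fun j' => φ (g j') :=
          funext fun j' => (hφg j').symm
        rw [hfe]
      rw [hcomm i, hcomm i', heq]
    have hρeq : ρ i = ρ i' := (hgbar r).injective h1
    set d := i' - i with hddef
    have hρd : ρ d = 0 := by rw [hddef, map_sub, hρeq, sub_self]
    have hdvd : m ∣ d.val := (hρker d).mp hρd
    have hii' : i' = i + d := by rw [hddef]; ring
    -- step 2: split the iterate
    have hsplit : ∀ j : ZMod n, Sop^[r] g j = Sop^[r] h j * z ^ ((AE^[r] c) j).val := by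
      intro j
      calc Sop^[r] g j = Sop^[r] (fun j' => h j' * w j') j := rfl
        _ = Sop^[r] h j * Sop^[r] w j := (Sop_mul_central h w hwc r).1 j
        _ = Sop^[r] h j * z ^ ((AE^[r] c) j).val := by
            exact congrArg (fun t => Sop^[r] h j * t) (Sop_zpow z horder c r j)
    -- step 3: h-iterates agree
    have h3 : Sop^[r] h i' = Sop^[r] h i := by
      rw [hii']
      rw [Sop_comp_shift (fun j => j + d) (fun j => by ring) r h i]
      have hfe : (fun j => h (j + d)) = h := by
        funext j
        show (gbar (ρ (j + d))).out = (gbar (ρ j)).out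
        rw [hρadd, hρd, add_zero]
      rw [hfe]
    -- step 4: central exponents agree
    have h4 : z ^ ((AE^[r] c) i').val = z ^ ((AE^[r] c) i).val := by
      have := heq
      rw [hsplit i, hsplit i', h3] at this
      exact (mul_left_cancel this).symm
    have h5 : (AE^[r] c) i' = (AE^[r] c) i := zpow_val_inj z horder h4
    -- step 5: conclude d = 0
    have h6 : (AE^[r] c) i + 2 ^ r * c d = (AE^[r] c) i := by
      have h60 := hAE d hdvd r i
      rw [← hii'] at h60
      rw [h5] at h60
      exact h60.symm
    have h7 : (2 : ZMod p) ^ r * c d = 0 := by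
      have := h6
      nth_rewrite 2 [← add_zero ((AE^[r] c) i)] at this
      exact add_left_cancel this
    have h8 : c d = 0 := by
      haveI : Fact p.Prime := ⟨hp⟩
      have h2ne : (2 : ZMod p) ≠ 0 := by
        intro hh
        have : ((2 : ℕ) : ZMod p) = 0 := by exact_mod_cast hh
        rw [ZMod.natCast_eq_zero_iff] at this
        exact hp2 ((Nat.prime_dvd_prime_iff_eq hp Nat.prime_two).mp this)
      have hpow : (2 : ZMod p) ^ r ≠ 0 := pow_ne_zero r h2ne
      exact (mul_eq_zero.mp h7).resolve_left hpow
    have h9 : d.val = 0 := by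
      obtain ⟨e, he⟩ := hdvd
      have hcd : c d = (e : ZMod p) := by
        rw [hcdef]
        simp only []
        rw [he, Nat.mul_div_cancel_left e hmpos]
      rw [hcd] at h8
      have helt : e < p := by
        have h0 : d.val < n := ZMod.val_lt d
        have h1 : m * e < m * p := by
          rw [← hnm, ← he]
          exact h0
        exact lt_of_mul_lt_mul_left h1 (le_of_lt hmpos)
      have : p ∣ e := (ZMod.natCast_eq_zero_iff e p).mp h8
      have : e = 0 := Nat.eq_zero_of_dvd_of_lt this helt
      rw [he, this, mul_zero]
    have hd0 : d = 0 := (ZMod.val_eq_zero d).mp h9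
    rw [hii', hd0, add_zero]

/-- A finite nilpotent group of odd order `n` admits a 1-1 cycle `g` of length `n`
such that `S^m(g)` is a 1-1 cycle for every positive integer `m`. -/
theorem statement16 (G : Type*) [Group G] [Finite G] (hnil : Group.IsNilpotent G)
    (hodd : Odd (Nat.card G)) :
    ∃ g : ZMod (Nat.card G) → G, Function.Bijective g ∧
      ∀ m : ℕ, 0 < m → Function.Bijective (Sop^[m] g) := by
  obtain ⟨g, hg⟩ := key_lemma (Nat.card G) G hnil rfl hodd
  exact ⟨g, by simpa using hg 0, fun m _ => hg m⟩
end
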